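/- arXiv:1405.5979 — 7 statements merged into one kernel-verified Lean document; each statement's English description precedes it below -/
import Mathlib

section
/- Every metric matrix A (a symmetric n×n matrix with zero diagonal, nonnegative entries, satisfying all triangle inequalities a_{ij} + a_{jk} ≥ a_{ik}) equals the tropical product, taken in any fixed order, of the lossy phone call matrices C_{kl}(a_{kl}) over all pairs k < l. -/
open scoped ENNReal

/-- Tropical (min-plus) matrix multiplication over [0,∞]. -/
noncomputable def tropMul {n : ℕ} (A B : Matrix (Fin n) (Fin n) ℝ≥0∞) :
    Matrix (Fin n) (Fin n) ℝ≥0∞ :=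
  fun i j => Finset.univ.inf fun k => A i k + B k j

/-- The tropical identity matrix: 0 on the diagonal, ∞ elsewhere. -/
noncomputable def tropId {n : ℕ} : Matrix (Fin n) (Fin n) ℝ≥0∞ :=
  fun i j => if i = j then 0 else ⊤

/-- The lossy phone call matrix C_{kl}(a): zero diagonal, value `a` at
positions (k,l) and (l,k), and ∞ elsewhere. -/
noncomputable def call {n : ℕ} (k l : Fin n) (a : ℝ≥0∞) : Matrix (Fin n) (Fin n) ℝ≥0∞ :=
  fun i j => if i = j then 0 else if (i = k ∧ j = l) ∨ (i = l ∧ j = k) then a else ⊤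

/-- The tropical product of a list of lossy phone call matrices. -/
noncomputable def prodC {n : ℕ} (l : List (Fin n × Fin n × ℝ≥0∞)) : Matrix (Fin n) (Fin n) ℝ≥0∞ :=
  (l.map fun t => call t.1 t.2.1 t.2.2).foldr tropMul tropId

lemma foldr_diag_le {n : ℕ} (l : List (Matrix (Fin n) (Fin n) ℝ≥0∞))
    (h : ∀ M ∈ l, ∀ i, M i i = 0) (i : Fin n) :
    l.foldr tropMul tropId i i ≤ 0 := by
  induction l with
  | nil => simp [tropId]
  | cons M l ih =>
    have h1 : (M :: l).foldr tropMul tropId i i ≤ M i i + l.foldr tropMul tropId i i :=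
      Finset.inf_le (Finset.mem_univ i)
    refine h1.trans ?_
    rw [h M (by simp) i, zero_add]
    exact ih fun N hN => h N (by simp [hN])

lemma foldr_le_mem {n : ℕ} (l : List (Matrix (Fin n) (Fin n) ℝ≥0∞))
    (h : ∀ M ∈ l, ∀ i, M i i = 0) {M : Matrix (Fin n) (Fin n) ℝ≥0∞} (hM : M ∈ l)
    (i j : Fin n) : l.foldr tropMul tropId i j ≤ M i j := by
  induction l with
  | nil => simp at hM
  | cons N l ih =>
    rcases List.mem_cons.1 hM with rfl | hM'
    · have h1 : (M :: l).foldr tropMul tropId i j ≤ M i j + l.foldr tropMul tropId j j :=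
        Finset.inf_le (Finset.mem_univ j)
      refine h1.trans ?_
      have := foldr_diag_le l (fun N hN => h N (by simp [hN])) j
      calc M i j + l.foldr tropMul tropId j j ≤ M i j + 0 := by gcongr
        _ = M i j := by rw [add_zero]
    · have h1 : (N :: l).foldr tropMul tropId i j ≤ N i i + l.foldr tropMul tropId i j :=
        Finset.inf_le (Finset.mem_univ i)
      refine h1.trans ?_
      rw [h N (by simp) i, zero_add]
      exact ih (fun P hP => h P (by simp [hP])) hM'

lemma foldr_ge {n : ℕ} (A : Matrix (Fin n) (Fin n) ℝ≥0∞)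
    (h0 : ∀ i, A i i = 0) (htri : ∀ i j k, A i k ≤ A i j + A j k)
    (l : List (Matrix (Fin n) (Fin n) ℝ≥0∞))
    (h : ∀ M ∈ l, ∀ i j, A i j ≤ M i j) :
    ∀ i j, A i j ≤ l.foldr tropMul tropId i j := by
  induction l with
  | nil =>
    intro i j
    simp only [List.foldr_nil, tropId]
    split
    · subst ‹i = j›; rw [h0]
    · exact le_top (α := ℝ≥0∞)
  | cons M l ih =>
    intro i j
    show A i j ≤ Finset.univ.inf fun k => M i k + l.foldr tropMul tropId k j
    refine Finset.le_inf fun k _ => ?_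
    calc A i j ≤ A i k + A k j := htri i k j
      _ ≤ M i k + l.foldr tropMul tropId k j := by
          gcongr
          · exact h M (by simp) i k
          · exact (ih (fun N hN => h N (by simp [hN]))) k j

theorem metric_eq_prod_calls {n : ℕ} (A : Matrix (Fin n) (Fin n) ℝ≥0∞)
    (h0 : ∀ i, A i i = 0) (hsymm : ∀ i j, A i j = A j i)
    (htri : ∀ i j k, A i k ≤ A i j + A j k)
    (L : List (Fin n × Fin n)) (hL : ∀ p : Fin n × Fin n, p ∈ L ↔ p.1 < p.2)
    (hnd : L.Nodup) :
    (L.map fun p => call p.1 p.2 (A p.1 p.2)).foldr tropMul tropId = A := by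
  have hdiag : ∀ M ∈ (L.map fun p => call p.1 p.2 (A p.1 p.2)), ∀ i, M i i = 0 := by
    intro M hM i
    obtain ⟨p, -, rfl⟩ := List.mem_map.1 hM
    simp [call]
  funext i j
  apply le_antisymm
  · rcases eq_or_ne i j with rfl | hij
    · rw [h0]; exact foldr_diag_le _ hdiag i
    · rcases lt_or_gt_of_ne hij with hlt | hgt
      · have hmem : call i j (A i j) ∈ L.map fun p => call p.1 p.2 (A p.1 p.2) :=
          List.mem_map.2 ⟨(i, j), (hL (i, j)).2 hlt, rfl⟩
        have := foldr_le_mem _ hdiag hmem i j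
        simpa [call, hij] using this
      · have hmem : call j i (A j i) ∈ L.map fun p => call p.1 p.2 (A p.1 p.2) :=
          List.mem_map.2 ⟨(j, i), (hL (j, i)).2 hgt, rfl⟩
        have := foldr_le_mem _ hdiag hmem i j
        rw [hsymm i j]
        simpa [call, hij] using this
  · apply foldr_ge A h0 htri _ ?_ i j
    intro M hM i j
    obtain ⟨p, -, rfl⟩ := List.mem_map.1 hM
    simp only [call]
    split
    · subst ‹i = j›; rw [h0]
    · split
      · rcases ‹_ ∨ _› with ⟨rfl, rfl⟩ | ⟨rfl, rfl⟩
        · exact le_refl _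
        · rw [hsymm]
      · exact le_top (α := ℝ≥0∞)
end

section
/- Let A be a tropical product of finitely many lossy phone call matrices C_{i_r,j_r}(b_r) with b_r ∈ [0,∞]. Then for every partition of [n] into nonempty sets K and L, either a_{kl} = a_{lk} = ∞ for all k ∈ K and l ∈ L, or there exist k ∈ K and l ∈ L with a_{kl} = a_{lk} < ∞. Consequently A satisfies a_{ij} = a_{ji} for at least n−1 pairs {i,j} forming a connected graph on [n]. -/
open scoped ENNReal

/-- The graph on [n] whose edges are the pairs {i,j} with a_{ij} = a_{ji}. -/
def symGraph {n : ℕ} (A : Matrix (Fin n) (Fin n) ℝ≥0∞) : SimpleGraph (Fin n) where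
  Adj i j := i ≠ j ∧ A i j = A j i
  symm := by constructor; intro i j h; exact ⟨h.1.symm, h.2.symm⟩
  loopless := by constructor; intro i h; exact h.1 rfl

section aux
variable {n : ℕ}

lemma tropMul_le (A B : Matrix (Fin n) (Fin n) ℝ≥0∞) (i j s : Fin n) :
    tropMul A B i j ≤ A i s + B s j := Finset.inf_le (Finset.mem_univ s)

lemma le_tropMul (A B : Matrix (Fin n) (Fin n) ℝ≥0∞) (i j : Fin n) (c : ℝ≥0∞)
    (h : ∀ s, c ≤ A i s + B s j) : c ≤ tropMul A B i j := Finset.le_inf fun s _ => h s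

lemma call_comm (p q : Fin n) (b : ℝ≥0∞) : call p q b = call q p b := by
  funext i j; simp only [call, or_comm]

lemma prodC_cons (t : Fin n × Fin n × ℝ≥0∞) (l : List (Fin n × Fin n × ℝ≥0∞)) :
    prodC (t :: l) = tropMul (call t.1 t.2.1 t.2.2) (prodC l) := rfl

lemma prodC_diag (l : List (Fin n × Fin n × ℝ≥0∞)) (i : Fin n) : prodC l i i = 0 := by
  induction l with
  | nil => simp [prodC, tropId]
  | cons t l ih =>
    rw [prodC_cons]
    refine le_antisymm ?_ zero_le
    have := tropMul_le (call t.1 t.2.1 t.2.2) (prodC l) i i i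
    simpa [call, ih] using this

lemma tropMul_call_le (p q : Fin n) (b : ℝ≥0∞) (B : Matrix (Fin n) (Fin n) ℝ≥0∞)
    (i j : Fin n) : tropMul (call p q b) B i j ≤ B i j := by
  have := tropMul_le (call p q b) B i j i
  simpa [call] using this

lemma tropMul_call_other (p q : Fin n) (b : ℝ≥0∞) (B : Matrix (Fin n) (Fin n) ℝ≥0∞)
    (i j : Fin n) (hip : i ≠ p) (hiq : i ≠ q) : tropMul (call p q b) B i j = B i j := by
  refine le_antisymm (tropMul_call_le p q b B i j) ?_
  refine le_tropMul _ _ _ _ _ fun s => ?_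
  by_cases h : s = i
  · subst h; simp [call]
  · have : call p q b i s = ⊤ := by
      simp [call, hip, hiq, Ne.symm h]
    simp [this]

lemma tropMul_call_row (p q : Fin n) (hpq : p ≠ q) (b : ℝ≥0∞)
    (B : Matrix (Fin n) (Fin n) ℝ≥0∞) (j : Fin n) :
    tropMul (call p q b) B p j = min (B p j) (b + B q j) := by
  refine le_antisymm (le_min ?_ ?_) ?_
  · have := tropMul_le (call p q b) B p j p
    simpa [call] using this
  · have := tropMul_le (call p q b) B p j q
    simpa [call, hpq] using this
  · refine le_tropMul _ _ _ _ _ fun s => ?_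
    by_cases h1 : s = p
    · subst h1; simp [call]
    · by_cases h2 : s = q
      · subst h2; simp [call, hpq]
      · have : call p q b p s = ⊤ := by
          simp [call, Ne.symm h1, hpq, h2, h1]
        simp [this]

lemma tropMul_call_row' (p q : Fin n) (hpq : p ≠ q) (b : ℝ≥0∞)
    (B : Matrix (Fin n) (Fin n) ℝ≥0∞) (j : Fin n) :
    tropMul (call p q b) B q j = min (B q j) (b + B p j) := by
  rw [call_comm]; exact tropMul_call_row q p (Ne.symm hpq) b B j

end aux

section step
variable {n : ℕ}

lemma stepSame (p q : Fin n) (hpq : p ≠ q) (b : ℝ≥0∞) (B : Matrix (Fin n) (Fin n) ℝ≥0∞)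
    (K : Finset (Fin n)) (hp : p ∈ K) (hq : q ∈ K)
    (k₀ m₀ : Fin n) (hk₀ : k₀ ∈ K) (hm₀ : m₀ ∈ Kᶜ)
    (hsym : B k₀ m₀ = B m₀ k₀)
    (hmin : ∀ k' ∈ K, ∀ m' ∈ Kᶜ, B k₀ m₀ ≤ B k' m' ∧ B k₀ m₀ ≤ B m' k') :
    ∃ k ∈ K, ∃ m ∈ Kᶜ, tropMul (call p q b) B k m = tropMul (call p q b) B m k ∧
      ∀ k' ∈ K, ∀ m' ∈ Kᶜ, tropMul (call p q b) B k m ≤ tropMul (call p q b) B k' m' ∧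
        tropMul (call p q b) B k m ≤ tropMul (call p q b) B m' k' := by
  set A := tropMul (call p q b) B with hA
  set μ := B k₀ m₀ with hμ
  have hmem : ∀ m' ∈ Kᶜ, m' ≠ p ∧ m' ≠ q := fun m' hm' =>
    ⟨fun h => (Finset.mem_compl.mp hm') (h ▸ hp), fun h => (Finset.mem_compl.mp hm') (h ▸ hq)⟩
  have hlow : ∀ k' ∈ K, ∀ m' ∈ Kᶜ, μ ≤ A k' m' ∧ μ ≤ A m' k' := by
    intro k' hk' m' hm'
    constructor
    · by_cases h1 : k' = p
      · rw [hA, h1, tropMul_call_row p q hpq b B m']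
        exact le_min (h1 ▸ (hmin _ hk' _ hm').1) (le_trans (hmin _ hq _ hm').1 le_add_self)
      · by_cases h2 : k' = q
        · rw [hA, h2, tropMul_call_row' p q hpq b B m']
          exact le_min (h2 ▸ (hmin _ hk' _ hm').1) (le_trans (hmin _ hp _ hm').1 le_add_self)
        · rw [hA, tropMul_call_other p q b B k' m' h1 h2]
          exact (hmin _ hk' _ hm').1
    · rw [hA, tropMul_call_other p q b B m' k' (hmem m' hm').1 (hmem m' hm').2]
      exact (hmin _ hk' _ hm').2
  have e1 : A k₀ m₀ = μ :=
    le_antisymm (tropMul_call_le p q b B k₀ m₀) (hlow _ hk₀ _ hm₀).1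
  have e2 : A m₀ k₀ = μ := by
    rw [hA, tropMul_call_other p q b B m₀ k₀ (hmem m₀ hm₀).1 (hmem m₀ hm₀).2, ← hsym]
  refine ⟨k₀, hk₀, m₀, hm₀, by rw [e1, e2], ?_⟩
  intro k' hk' m' hm'
  rw [e1]
  exact hlow k' hk' m' hm'

lemma stepCross (p q : Fin n) (b : ℝ≥0∞) (B : Matrix (Fin n) (Fin n) ℝ≥0∞)
    (hdiag : ∀ i, B i i = 0)
    (K : Finset (Fin n)) (hp : p ∈ K) (hq : q ∈ Kᶜ)
    (k₀ m₀ : Fin n) (hk₀ : k₀ ∈ K) (hm₀ : m₀ ∈ Kᶜ)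
    (hsym : B k₀ m₀ = B m₀ k₀)
    (hmin : ∀ k' ∈ K, ∀ m' ∈ Kᶜ, B k₀ m₀ ≤ B k' m' ∧ B k₀ m₀ ≤ B m' k') :
    ∃ k ∈ K, ∃ m ∈ Kᶜ, tropMul (call p q b) B k m = tropMul (call p q b) B m k ∧
      ∀ k' ∈ K, ∀ m' ∈ Kᶜ, tropMul (call p q b) B k m ≤ tropMul (call p q b) B k' m' ∧
        tropMul (call p q b) B k m ≤ tropMul (call p q b) B m' k' := by
  set A := tropMul (call p q b) B with hA
  set μ := B k₀ m₀ with hμ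
  have hpq : p ≠ q := fun h => (Finset.mem_compl.mp hq) (h ▸ hp)
  have hKq : ∀ k' ∈ K, k' ≠ q := fun k' hk' h => (Finset.mem_compl.mp hq) (h ▸ hk')
  have hKp : ∀ m' ∈ Kᶜ, m' ≠ p := fun m' hm' h => (Finset.mem_compl.mp hm') (h ▸ hp)
  rcases le_total b μ with hbμ | hμb
  · -- pair (p, q), value b
    have e1 : A p q = b := by
      rw [hA, tropMul_call_row p q hpq b B q, hdiag, add_zero,
        min_eq_right (hbμ.trans (hmin _ hp _ hq).1)]
    have e2 : A q p = b := by
      rw [hA, tropMul_call_row' p q hpq b B p, hdiag, add_zero,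
        min_eq_right (hbμ.trans (hmin _ hp _ hq).2)]
    refine ⟨p, hp, q, hq, by rw [e1, e2], ?_⟩
    intro k' hk' m' hm'
    rw [e1]
    constructor
    · by_cases h1 : k' = p
      · rw [hA, h1, tropMul_call_row p q hpq b B m']
        refine le_min ?_ le_self_add
        exact h1 ▸ (hbμ.trans (hmin _ hk' _ hm').1)
      · rw [hA, tropMul_call_other p q b B k' m' h1 (hKq k' hk')]
        exact hbμ.trans (hmin _ hk' _ hm').1
    · by_cases h2 : m' = q
      · rw [hA, h2, tropMul_call_row' p q hpq b B k']
        refine le_min ?_ le_self_add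
        exact h2 ▸ (hbμ.trans (hmin _ hk' _ hm').2)
      · rw [hA, tropMul_call_other p q b B m' k' (hKp m' hm') h2]
        exact hbμ.trans (hmin _ hk' _ hm').2
  · -- pair (k₀, m₀), value μ
    have e1 : A k₀ m₀ = μ := by
      by_cases h1 : k₀ = p
      · rw [hA, h1, tropMul_call_row p q hpq b B m₀, ← h1, ← hμ,
          min_eq_left (hμb.trans le_self_add)]
      · rw [hA, tropMul_call_other p q b B k₀ m₀ h1 (hKq k₀ hk₀)]
    have e2 : A m₀ k₀ = μ := by
      by_cases h2 : m₀ = q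
      · rw [hA, h2, tropMul_call_row' p q hpq b B k₀, ← h2, ← hsym,
          min_eq_left (hμb.trans le_self_add)]
      · rw [hA, tropMul_call_other p q b B m₀ k₀ (hKp m₀ hm₀) h2, ← hsym]
    refine ⟨k₀, hk₀, m₀, hm₀, by rw [e1, e2], ?_⟩
    intro k' hk' m' hm'
    rw [e1]
    constructor
    · by_cases h1 : k' = p
      · rw [hA, h1, tropMul_call_row p q hpq b B m']
        refine le_min ?_ (hμb.trans le_self_add)
        exact h1 ▸ (hmin _ hk' _ hm').1
      · rw [hA, tropMul_call_other p q b B k' m' h1 (hKq k' hk')]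
        exact (hmin _ hk' _ hm').1
    · by_cases h2 : m' = q
      · rw [hA, h2, tropMul_call_row' p q hpq b B k']
        refine le_min ?_ (hμb.trans le_self_add)
        exact h2 ▸ (hmin _ hk' _ hm').2
      · rw [hA, tropMul_call_other p q b B m' k' (hKp m' hm') h2]
        exact (hmin _ hk' _ hm').2

end step

lemma key {n : ℕ} (l : List (Fin n × Fin n × ℝ≥0∞)) (hd : ∀ t ∈ l, t.1 ≠ t.2.1)
    (K : Finset (Fin n)) (hK : K.Nonempty) (hKc : Kᶜ.Nonempty) :
    ∃ k ∈ K, ∃ m ∈ Kᶜ, prodC l k m = prodC l m k ∧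
      ∀ k' ∈ K, ∀ m' ∈ Kᶜ, prodC l k m ≤ prodC l k' m' ∧ prodC l k m ≤ prodC l m' k' := by
  induction l with
  | nil =>
    obtain ⟨k, hk⟩ := hK; obtain ⟨m, hm⟩ := hKc
    have htop : ∀ k' ∈ K, ∀ m' ∈ Kᶜ,
        prodC ([] : List (Fin n × Fin n × ℝ≥0∞)) k' m' = ⊤ ∧
        prodC ([] : List (Fin n × Fin n × ℝ≥0∞)) m' k' = ⊤ := by
      intro k' hk' m' hm'
      have h1 : k' ≠ m' := fun h => (Finset.mem_compl.mp hm') (h ▸ hk')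
      constructor <;> simp [prodC, tropId, h1, Ne.symm h1]
    refine ⟨k, hk, m, hm, ?_, ?_⟩
    · rw [(htop k hk m hm).1, (htop k hk m hm).2]
    · intro k' hk' m' hm'
      rw [(htop k' hk' m' hm').1, (htop k' hk' m' hm').2, (htop k hk m hm).1]
      exact ⟨le_refl _, le_refl _⟩
  | cons t l ih =>
    have hd' : ∀ t' ∈ l, t'.1 ≠ t'.2.1 := fun t' ht' => hd t' (List.mem_cons_of_mem _ ht')
    have hpq : t.1 ≠ t.2.1 := hd t List.mem_cons_self
    obtain ⟨k₀, hk₀, m₀, hm₀, hsym, hmin⟩ := ih hd'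
    obtain ⟨p, q, b⟩ := t
    simp only [prodC_cons]
    have hdiag := prodC_diag l
    by_cases hpK : p ∈ K <;> by_cases hqK : q ∈ K
    · exact stepSame p q hpq b (prodC l) K hpK hqK k₀ m₀ hk₀ hm₀ hsym hmin
    · exact stepCross p q b (prodC l) hdiag K hpK (Finset.mem_compl.mpr hqK)
        k₀ m₀ hk₀ hm₀ hsym hmin
    · rw [call_comm]
      exact stepCross q p b (prodC l) hdiag K hqK (Finset.mem_compl.mpr hpK)
        k₀ m₀ hk₀ hm₀ hsym hmin
    · have hp' : p ∈ Kᶜ := Finset.mem_compl.mpr hpK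
      have hq' : q ∈ Kᶜ := Finset.mem_compl.mpr hqK
      have hk₀' : k₀ ∈ Kᶜᶜ := by rw [compl_compl]; exact hk₀
      have hmin' : ∀ k' ∈ Kᶜ, ∀ m' ∈ Kᶜᶜ,
          prodC l m₀ k₀ ≤ prodC l k' m' ∧ prodC l m₀ k₀ ≤ prodC l m' k' := by
        intro k' hk' m' hm'
        rw [compl_compl] at hm'
        exact ⟨hsym ▸ (hmin m' hm' k' hk').2, hsym ▸ (hmin m' hm' k' hk').1⟩
      obtain ⟨k, hk, m, hm, hs, hb⟩ := stepSame p q hpq b (prodC l) Kᶜ hp' hq'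
        m₀ k₀ hm₀ hk₀' hsym.symm hmin'
      rw [compl_compl] at hm
      refine ⟨m, hm, k, hk, hs.symm, ?_⟩
      intro k' hk' m' hm'
      have hk'' : k' ∈ Kᶜᶜ := by rw [compl_compl]; exact hk'
      have := hb m' hm' k' hk''
      exact ⟨hs ▸ this.2, hs ▸ this.1⟩

theorem symmetric_core {n : ℕ} (hn : 1 ≤ n)
    (l : List (Fin n × Fin n × ℝ≥0∞)) (hd : ∀ t ∈ l, t.1 ≠ t.2.1) :
    (∀ K : Finset (Fin n), K.Nonempty → Kᶜ.Nonempty →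
      (∀ k ∈ K, ∀ m ∈ Kᶜ, prodC l k m = ⊤ ∧ prodC l m k = ⊤) ∨
      (∃ k ∈ K, ∃ m ∈ Kᶜ, prodC l k m = prodC l m k ∧ prodC l k m ≠ ⊤)) ∧
    (symGraph (prodC l)).Connected := by
  classical
  constructor
  · intro K hK hKc
    obtain ⟨k, hk, m, hm, hsym, hmin⟩ := key l hd K hK hKc
    by_cases h : prodC l k m = ⊤
    · left
      intro k' hk' m' hm'
      have h2 := hmin k' hk' m' hm'
      exact ⟨top_le_iff.mp (h ▸ h2.1), top_le_iff.mp (h ▸ h2.2)⟩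
    · right; exact ⟨k, hk, m, hm, hsym, h⟩
  · have hvne : Nonempty (Fin n) := ⟨⟨0, hn⟩⟩
    have hedge : ∀ K : Finset (Fin n), K.Nonempty → Kᶜ.Nonempty →
        ∃ k ∈ K, ∃ m ∈ Kᶜ, (symGraph (prodC l)).Adj k m := by
      intro K hK hKc
      obtain ⟨k, hk, m, hm, hsym, -⟩ := key l hd K hK hKc
      exact ⟨k, hk, m, hm, fun h => (Finset.mem_compl.mp hm) (h ▸ hk), hsym⟩
    haveI := hvne
    refine ⟨?_⟩
    intro u w
    by_contra hw
    set G := symGraph (prodC l) with hG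
    set K : Finset (Fin n) := Finset.univ.filter (fun x => G.Reachable u x) with hKdef
    have hu : u ∈ K := by simp [hKdef]
    have hwC : w ∈ Kᶜ := by simp [hKdef]; exact hw
    obtain ⟨k, hk, m, hm, hadj⟩ := hedge K ⟨u, hu⟩ ⟨w, hwC⟩
    have hrk : G.Reachable u k := by simpa [hKdef] using hk
    have hrm : G.Reachable u m := hrk.trans hadj.reachable
    exact (Finset.mem_compl.mp hm) (by simp [hKdef, hrm])
end

section
/- For n×n matrices A_1, …, A_s over [0,∞] each with zero diagonal, and any permutation π of {1,…,s}, the Kleene star of the product is invariant: (A_1 ⊙ ⋯ ⊙ A_s)* = (A_{π(1)} ⊙ ⋯ ⊙ A_{π(s)})*. -/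
open scoped ENNReal

/-- Tropical matrix power: A^{⊙0} = I, A^{⊙(s+1)} = A ⊙ A^{⊙s}. -/
noncomputable def tropPow {n : ℕ} (A : Matrix (Fin n) (Fin n) ℝ≥0∞) : ℕ → Matrix (Fin n) (Fin n) ℝ≥0∞
  | 0 => tropId
  | s + 1 => tropMul A (tropPow A s)

/-- Entrywise minimum A ⊕ B. -/
noncomputable def tropAdd {n : ℕ} (A B : Matrix (Fin n) (Fin n) ℝ≥0∞) : Matrix (Fin n) (Fin n) ℝ≥0∞ :=
  fun i j => min (A i j) (B i j)

/-- The Kleene star A* = I ⊕ A ⊕ A^{⊙2} ⊕ ⋯ . -/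
noncomputable def kleene {n : ℕ} (A : Matrix (Fin n) (Fin n) ℝ≥0∞) : Matrix (Fin n) (Fin n) ℝ≥0∞ :=
  fun i j => ⨅ s : ℕ, tropPow A s i j

namespace KleeneAux

variable {n : ℕ}

lemma tropMul_mono {A A' B B' : Matrix (Fin n) (Fin n) ℝ≥0∞}
    (hA : ∀ i j, A i j ≤ A' i j) (hB : ∀ i j, B i j ≤ B' i j) :
    ∀ i j, tropMul A B i j ≤ tropMul A' B' i j := by
  intro i j
  exact Finset.inf_mono_fun fun k _ => add_le_add (hA i k) (hB k j)

lemma tropMul_diag {A B : Matrix (Fin n) (Fin n) ℝ≥0∞}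
    (hA : ∀ i, A i i = 0) (hB : ∀ i, B i i = 0) : ∀ i, tropMul A B i i = 0 := by
  intro i
  refine le_antisymm ?_ zero_le
  calc tropMul A B i i ≤ A i i + B i i := Finset.inf_le (Finset.mem_univ i)
    _ = 0 := by rw [hA, hB, add_zero]

lemma tropMul_le_left {A B : Matrix (Fin n) (Fin n) ℝ≥0∞}
    (hB : ∀ i, B i i = 0) : ∀ i j, tropMul A B i j ≤ A i j := by
  intro i j
  calc tropMul A B i j ≤ A i j + B j j := Finset.inf_le (Finset.mem_univ j)
    _ = A i j := by rw [hB, add_zero]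

lemma tropMul_le_right {A B : Matrix (Fin n) (Fin n) ℝ≥0∞}
    (hA : ∀ i, A i i = 0) : ∀ i j, tropMul A B i j ≤ B i j := by
  intro i j
  calc tropMul A B i j ≤ A i i + B i j := Finset.inf_le (Finset.mem_univ i)
    _ = B i j := by rw [hA, zero_add]

lemma prod_diag {L : List (Matrix (Fin n) (Fin n) ℝ≥0∞)}
    (h : ∀ X ∈ L, ∀ i, X i i = 0) : ∀ i, (L.foldr tropMul tropId) i i = 0 := by
  induction L with
  | nil => intro i; simp [tropId]
  | cons x L ih =>
      exact tropMul_diag (h x (List.mem_cons_self))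
        (ih fun X hX => h X (List.mem_cons_of_mem _ hX))

lemma prod_le_mem {L : List (Matrix (Fin n) (Fin n) ℝ≥0∞)}
    (h : ∀ X ∈ L, ∀ i, X i i = 0) :
    ∀ X ∈ L, ∀ i j, (L.foldr tropMul tropId) i j ≤ X i j := by
  induction L with
  | nil => intro X hX; simp at hX
  | cons x L ih =>
      intro X hX i j
      have hdiag : ∀ i, (L.foldr tropMul tropId) i i = 0 :=
        prod_diag (fun Y hY => h Y (List.mem_cons_of_mem _ hY))
      rcases List.mem_cons.mp hX with rfl | hX
      · exact tropMul_le_left hdiag i j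
      · calc (List.foldr tropMul tropId (x :: L)) i j
            ≤ (L.foldr tropMul tropId) i j :=
              tropMul_le_right (h x (List.mem_cons_self)) i j
          _ ≤ X i j := ih (fun Y hY => h Y (List.mem_cons_of_mem _ hY)) X hX i j

lemma inf_add_const (f : Fin n → ℝ≥0∞) (c : ℝ≥0∞) :
    Finset.univ.inf f + c = Finset.univ.inf fun m => f m + c := by
  refine le_antisymm (Finset.le_inf fun m _ => add_le_add (Finset.inf_le (Finset.mem_univ m)) le_rfl) ?_
  rcases Nat.eq_zero_or_pos n with rfl | hn
  · simp
  · have hne : (Finset.univ : Finset (Fin n)).Nonempty := ⟨⟨0, hn⟩, Finset.mem_univ _⟩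
    obtain ⟨m0, _, hm0⟩ := Finset.exists_mem_eq_inf Finset.univ hne f
    rw [hm0]
    exact Finset.inf_le (Finset.mem_univ m0)

lemma tropPow_add (M : Matrix (Fin n) (Fin n) ℝ≥0∞) :
    ∀ a b : ℕ, ∀ i k j, tropPow M (a + b) i j ≤ tropPow M a i k + tropPow M b k j := by
  intro a
  induction a with
  | zero =>
      intro b i k j
      by_cases h : i = k
      · subst h; simp [tropPow, tropId]
      · simp [tropPow, tropId, h]
  | succ a ih =>
      intro b i k j
      have hn : a + 1 + b = (a + b) + 1 := by omega
      rw [hn]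
      show tropMul M (tropPow M (a + b)) i j ≤ tropMul M (tropPow M a) i k + tropPow M b k j
      rw [show tropMul M (tropPow M a) i k = Finset.univ.inf fun m => M i m + tropPow M a m k from rfl,
        inf_add_const]
      refine Finset.inf_mono_fun fun m _ => ?_
      calc M i m + tropPow M (a + b) m j
          ≤ M i m + (tropPow M a m k + tropPow M b k j) := add_le_add le_rfl (ih b m k j)
        _ = M i m + tropPow M a m k + tropPow M b k j := (add_assoc _ _ _).symm

lemma kleene_le_pow (M : Matrix (Fin n) (Fin n) ℝ≥0∞) (t : ℕ) (i j : Fin n) :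
    kleene M i j ≤ tropPow M t i j := iInf_le _ t

lemma kleene_le_id (M : Matrix (Fin n) (Fin n) ℝ≥0∞) (i j : Fin n) :
    kleene M i j ≤ tropId i j := kleene_le_pow M 0 i j

lemma kleene_le_self (M : Matrix (Fin n) (Fin n) ℝ≥0∞) (i j : Fin n) :
    kleene M i j ≤ M i j := by
  refine (kleene_le_pow M 1 i j).trans ?_
  calc tropPow M 1 i j ≤ M i j + tropId j j := Finset.inf_le (Finset.mem_univ j)
    _ = M i j := by simp [tropId]

lemma kleene_subadd (M : Matrix (Fin n) (Fin n) ℝ≥0∞) (i k j : Fin n) :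
    kleene M i j ≤ kleene M i k + kleene M k j := by
  show kleene M i j ≤ (⨅ a : ℕ, tropPow M a i k) + ⨅ b : ℕ, tropPow M b k j
  rw [ENNReal.iInf_add]
  refine le_iInf fun a => ?_
  rw [ENNReal.add_iInf]
  refine le_iInf fun b => ?_
  exact (kleene_le_pow M (a + b) i j).trans (tropPow_add M a b i k j)

lemma kleene_le_mul_self (M : Matrix (Fin n) (Fin n) ℝ≥0∞) (i j : Fin n) :
    kleene M i j ≤ tropMul (kleene M) (kleene M) i j :=
  Finset.le_inf fun k _ => kleene_subadd M i k j

lemma kleene_le_prod {L : List (Matrix (Fin n) (Fin n) ℝ≥0∞)}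
    (M : Matrix (Fin n) (Fin n) ℝ≥0∞)
    (h : ∀ X ∈ L, ∀ i j, kleene M i j ≤ X i j) :
    ∀ i j, kleene M i j ≤ (L.foldr tropMul tropId) i j := by
  induction L with
  | nil => intro i j; exact kleene_le_id M i j
  | cons x L ih =>
      intro i j
      refine (kleene_le_mul_self M i j).trans ?_
      exact tropMul_mono (h x (List.mem_cons_self))
        (ih fun Y hY => h Y (List.mem_cons_of_mem _ hY)) i j

lemma kleene_le_pow_of_le {P M : Matrix (Fin n) (Fin n) ℝ≥0∞}
    (h : ∀ i j, kleene M i j ≤ P i j) :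
    ∀ t i j, kleene M i j ≤ tropPow P t i j := by
  intro t
  induction t with
  | zero => exact kleene_le_id M
  | succ t ih =>
      intro i j
      exact (kleene_le_mul_self M i j).trans (tropMul_mono h ih i j)

lemma tropPow_mono {P Q : Matrix (Fin n) (Fin n) ℝ≥0∞}
    (h : ∀ i j, P i j ≤ Q i j) :
    ∀ t i j, tropPow P t i j ≤ tropPow Q t i j := by
  intro t
  induction t with
  | zero => intro i j; exact le_rfl
  | succ t ih => exact tropMul_mono h ih

end KleeneAux

open KleeneAux in
theorem kleene_perm_invariant {n s : ℕ}
    (A : Fin s → Matrix (Fin n) (Fin n) ℝ≥0∞)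
    (h0 : ∀ r i, A r i i = 0) (π : Equiv.Perm (Fin s)) :
    kleene ((List.ofFn A).foldr tropMul tropId) =
      kleene ((List.ofFn (A ∘ π)).foldr tropMul tropId) := by
  set M : Matrix (Fin n) (Fin n) ℝ≥0∞ := fun i j => Finset.univ.inf fun r => A r i j with hM
  have key : ∀ (B : Fin s → Matrix (Fin n) (Fin n) ℝ≥0∞),
      (∀ r i, B r i i = 0) →
      (∀ i j, M i j = Finset.univ.inf fun r => B r i j) →
      kleene ((List.ofFn B).foldr tropMul tropId) = kleene M := by
    intro B hB hMB
    set P := (List.ofFn B).foldr tropMul tropId with hP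
    have hmem : ∀ X ∈ List.ofFn B, ∀ i, X i i = 0 := by
      intro X hX i
      obtain ⟨r, rfl⟩ := List.mem_ofFn.mp hX
      exact hB r i
    have hPB : ∀ r i j, P i j ≤ B r i j := fun r =>
      prod_le_mem hmem (B r) (List.mem_ofFn.mpr ⟨r, rfl⟩)
    have hPM : ∀ i j, P i j ≤ M i j := by
      intro i j
      rw [hMB]
      exact Finset.le_inf fun r _ => hPB r i j
    have hKB : ∀ X ∈ List.ofFn B, ∀ i j, kleene M i j ≤ X i j := by
      intro X hX i j
      obtain ⟨r, rfl⟩ := List.mem_ofFn.mp hX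
      refine (kleene_le_self M i j).trans ?_
      rw [hMB]
      exact Finset.inf_le (Finset.mem_univ r)
    have hKP : ∀ i j, kleene M i j ≤ P i j := kleene_le_prod M hKB
    refine funext fun i => funext fun j => le_antisymm ?_ ?_
    · exact le_iInf fun t => (iInf_le _ t).trans (tropPow_mono hPM t i j)
    · exact le_iInf fun t => kleene_le_pow_of_le hKP t i j
  have h1 := key A h0 (fun i j => rfl)
  have h2 := key (A ∘ π) (fun r i => h0 (π r) i) ?_
  · rw [h1, h2]
  · intro i j
    show (Finset.univ.inf fun r => A r i j) = Finset.univ.inf fun r => A (π r) i j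
    calc (Finset.univ.inf fun r => A r i j)
        = (Finset.univ.map π.toEmbedding).inf fun r => A r i j := by
          rw [Finset.map_univ_equiv]
      _ = Finset.univ.inf ((fun r => A r i j) ∘ π.toEmbedding) :=
          Finset.inf_map _ _ _
      _ = Finset.univ.inf fun r => A (π r) i j := rfl
end

section
/- The Kleene star of any element of the lossy gossip monoid G_n is a symmetric matrix; in particular, if A is a tropical product of lossy phone call matrices, then A* = (A*)^⊤, hence A* is a metric matrix (symmetric, zero diagonal, satisfying all triangle inequalities). -/
open scoped ENNReal

open Matrix

section Aux
variable {n : ℕ}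

private lemma tropId_mul (A : Matrix (Fin n) (Fin n) ℝ≥0∞) : tropMul tropId A = A := by
  funext i j
  apply le_antisymm
  · exact le_trans (Finset.inf_le (Finset.mem_univ i)) (by simp [tropId])
  · apply Finset.le_inf
    intro k _
    rcases eq_or_ne i k with rfl | h
    · simp [tropId]
    · simp [tropId, h]

private lemma mul_tropId (A : Matrix (Fin n) (Fin n) ℝ≥0∞) : tropMul A tropId = A := by
  funext i j
  apply le_antisymm
  · exact le_trans (Finset.inf_le (Finset.mem_univ j)) (by simp [tropId])
  · apply Finset.le_inf
    intro k _
    rcases eq_or_ne k j with rfl | h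
    · simp [tropId]
    · simp [tropId, h]

private lemma tropMul_assoc (A B C : Matrix (Fin n) (Fin n) ℝ≥0∞) :
    tropMul (tropMul A B) C = tropMul A (tropMul B C) := by
  funext i j
  apply le_antisymm
  · apply Finset.le_inf
    intro k _
    obtain ⟨m, -, hm⟩ := Finset.exists_mem_eq_inf Finset.univ ⟨k, Finset.mem_univ k⟩
      (fun m => B k m + C m j)
    calc tropMul (tropMul A B) C i j ≤ tropMul A B i m + C m j :=
          Finset.inf_le (Finset.mem_univ m)
      _ ≤ (A i k + B k m) + C m j := add_le_add_left (Finset.inf_le (Finset.mem_univ k)) _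
      _ = A i k + (B k m + C m j) := add_assoc _ _ _
      _ = A i k + tropMul B C k j := by rw [tropMul]; rw [hm]
  · apply Finset.le_inf
    intro k _
    obtain ⟨m, -, hm⟩ := Finset.exists_mem_eq_inf Finset.univ ⟨k, Finset.mem_univ k⟩
      (fun m => A i m + B m k)
    calc tropMul A (tropMul B C) i j ≤ A i m + tropMul B C m j :=
          Finset.inf_le (Finset.mem_univ m)
      _ ≤ A i m + (B m k + C k j) := add_le_add_right (Finset.inf_le (Finset.mem_univ k)) _
      _ = (A i m + B m k) + C k j := (add_assoc _ _ _).symm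
      _ = tropMul A B i k + C k j := by rw [tropMul]; rw [hm]

private lemma tropMul_mono {A A' B B' : Matrix (Fin n) (Fin n) ℝ≥0∞}
    (hA : ∀ i j, A i j ≤ A' i j) (hB : ∀ i j, B i j ≤ B' i j) :
    ∀ i j, tropMul A B i j ≤ tropMul A' B' i j := fun i j =>
  Finset.inf_mono_fun (fun k _ => add_le_add (hA i k) (hB k j))

private lemma tropMul_le_right {A : Matrix (Fin n) (Fin n) ℝ≥0∞}
    (B : Matrix (Fin n) (Fin n) ℝ≥0∞) (hA : ∀ i, A i i = 0) :
    ∀ i j, tropMul A B i j ≤ B i j := fun i j =>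
  le_trans (Finset.inf_le (Finset.mem_univ i)) (by rw [hA i, zero_add])

/-- Product of a list of matrices. -/
private noncomputable def prodM (L : List (Matrix (Fin n) (Fin n) ℝ≥0∞)) :
    Matrix (Fin n) (Fin n) ℝ≥0∞ := L.foldr tropMul tropId

private lemma prodM_nil : prodM ([] : List (Matrix (Fin n) (Fin n) ℝ≥0∞)) = tropId := rfl

private lemma prodM_cons (A : Matrix (Fin n) (Fin n) ℝ≥0∞) (L) :
    prodM (A :: L) = tropMul A (prodM L) := rfl

private lemma prodM_append (L1 L2 : List (Matrix (Fin n) (Fin n) ℝ≥0∞)) :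
    prodM (L1 ++ L2) = tropMul (prodM L1) (prodM L2) := by
  induction L1 with
  | nil => simp [prodM_nil, tropId_mul]
  | cons A T ih => rw [List.cons_append, prodM_cons, prodM_cons, ih, tropMul_assoc]

private lemma prodM_diag {L : List (Matrix (Fin n) (Fin n) ℝ≥0∞)}
    (h : ∀ M ∈ L, ∀ i, M i i = 0) : ∀ i, prodM L i i = 0 := by
  induction L with
  | nil => intro i; simp [prodM_nil, tropId]
  | cons A T ih =>
      intro i
      have h1 : prodM (A :: T) i i ≤ A i i + prodM T i i :=
        Finset.inf_le (Finset.mem_univ i)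
      rw [h A (List.mem_cons_self) i, ih (fun M hM => h M (List.mem_cons_of_mem _ hM)) i,
        zero_add] at h1
      exact le_antisymm h1 zero_le

private lemma prodM_sublist {L1 L2 : List (Matrix (Fin n) (Fin n) ℝ≥0∞)}
    (h : L1.Sublist L2) (hz : ∀ M ∈ L2, ∀ i, M i i = 0) :
    ∀ i j, prodM L2 i j ≤ prodM L1 i j := by
  induction h with
  | slnil => exact fun i j => le_refl _
  | cons M h ih =>
      intro i j
      exact le_trans (tropMul_le_right _ (hz M (List.mem_cons_self)) i j)
        (ih (fun N hN => hz N (List.mem_cons_of_mem _ hN)) i j)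
  | cons_cons M h ih =>
      exact tropMul_mono (fun _ _ => le_refl _)
        (ih (fun N hN => hz N (List.mem_cons_of_mem _ hN)))

private lemma tropId_transpose : (tropId : Matrix (Fin n) (Fin n) ℝ≥0∞)ᵀ = tropId := by
  funext i j
  simp only [Matrix.transpose_apply, tropId]
  by_cases h : i = j
  · simp [h]
  · simp [h, Ne.symm h]

private lemma tropMul_transpose (A B : Matrix (Fin n) (Fin n) ℝ≥0∞) :
    (tropMul A B)ᵀ = tropMul Bᵀ Aᵀ := by
  funext i j
  simp only [Matrix.transpose_apply, tropMul]
  exact Finset.inf_congr rfl (fun k _ => add_comm _ _)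

private lemma prodM_reverse_transpose {L : List (Matrix (Fin n) (Fin n) ℝ≥0∞)}
    (hsym : ∀ M ∈ L, Mᵀ = M) : (prodM L)ᵀ = prodM L.reverse := by
  induction L with
  | nil => simpa [prodM_nil] using tropId_transpose
  | cons A T ih =>
      rw [List.reverse_cons, prodM_append, prodM_cons, tropMul_transpose,
        hsym A (List.mem_cons_self), ih (fun M hM => hsym M (List.mem_cons_of_mem _ hM)),
        prodM_cons, prodM_nil, mul_tropId]

private lemma tropPow_add (A : Matrix (Fin n) (Fin n) ℝ≥0∞) (a b : ℕ) :
    tropPow A (a + b) = tropMul (tropPow A a) (tropPow A b) := by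
  induction a with
  | zero => simp [tropPow, tropId_mul]
  | succ a ih =>
      have : a + 1 + b = (a + b) + 1 := by omega
      rw [this]
      show tropMul A (tropPow A (a + b)) = _
      rw [ih]
      show _ = tropMul (tropMul A (tropPow A a)) (tropPow A b)
      rw [tropMul_assoc]

private lemma tropPow_succ' (A : Matrix (Fin n) (Fin n) ℝ≥0∞) (s : ℕ) :
    tropPow A (s + 1) = tropMul (tropPow A s) A := by
  rw [tropPow_add, show tropPow A 1 = A from mul_tropId A]

private lemma tropPow_mul (A : Matrix (Fin n) (Fin n) ℝ≥0∞) (m t : ℕ) :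
    tropPow A (m * t) = tropPow (tropPow A m) t := by
  induction t with
  | zero => simp [tropPow]
  | succ t ih =>
      have : m * (t + 1) = m + m * t := by ring
      rw [this, tropPow_add]
      show _ = tropMul (tropPow A m) (tropPow (tropPow A m) t)
      rw [ih]

private lemma tropPow_mono {A B : Matrix (Fin n) (Fin n) ℝ≥0∞}
    (h : ∀ i j, A i j ≤ B i j) (s : ℕ) : ∀ i j, tropPow A s i j ≤ tropPow B s i j := by
  induction s with
  | zero => exact fun i j => le_refl _
  | succ s ih => exact tropMul_mono h ih

private lemma tropPow_transpose (A : Matrix (Fin n) (Fin n) ℝ≥0∞) (s : ℕ) :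
    (tropPow A s)ᵀ = tropPow Aᵀ s := by
  induction s with
  | zero => exact tropId_transpose
  | succ s ih =>
      show (tropMul A (tropPow A s))ᵀ = _
      rw [tropMul_transpose, ih, ← tropPow_succ']

private lemma tropPow_prodM (R : List (Matrix (Fin n) (Fin n) ℝ≥0∞)) (s : ℕ) :
    tropPow (prodM R) s = prodM (List.replicate s R).flatten := by
  induction s with
  | zero => rfl
  | succ s ih =>
      rw [List.replicate_succ, List.flatten_cons, prodM_append, ← ih]
      rfl

private lemma replicate_flatten_sublist {α : Type*} {L1 L2 : List α} (h : L1.Sublist L2) :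
    ∀ m : ℕ, (List.replicate m L1).flatten.Sublist (List.replicate m L2).flatten := by
  intro m
  induction m with
  | zero => simp
  | succ m ih =>
      rw [List.replicate_succ, List.replicate_succ, List.flatten_cons, List.flatten_cons]
      exact h.append ih

private lemma key_sublist {α : Type*} (L : List α) :
    L.Sublist (List.replicate L.length L.reverse).flatten := by
  induction L with
  | nil => simp
  | cons a T ih =>
      rw [List.length_cons, List.reverse_cons, List.replicate_succ, List.flatten_cons]
      have h1 : [a].Sublist (T.reverse ++ [a]) := List.sublist_append_right _ _
      have h2 : T.Sublist (List.replicate T.length (T.reverse ++ [a])).flatten :=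
        ih.trans (replicate_flatten_sublist (List.sublist_append_left _ _) T.length)
      simpa using h1.append h2

private lemma kleene_reverse_le {L : List (Matrix (Fin n) (Fin n) ℝ≥0∞)}
    (hz : ∀ M ∈ L, ∀ i, M i i = 0) :
    ∀ i j, kleene (prodM L.reverse) i j ≤ kleene (prodM L) i j := by
  intro i j
  apply le_iInf
  intro t
  have hz' : ∀ M ∈ (List.replicate L.length L.reverse).flatten, ∀ i, M i i = 0 := by
    intro M hM
    rw [List.mem_flatten] at hM
    obtain ⟨S, hS, hMS⟩ := hM
    rw [List.eq_of_mem_replicate hS, List.mem_reverse] at hMS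
    exact hz M hMS
  have h1 : ∀ i j, tropPow (prodM L.reverse) L.length i j ≤ prodM L i j := by
    rw [tropPow_prodM]
    exact prodM_sublist (key_sublist L) hz'
  have h2 : tropPow (prodM L.reverse) (L.length * t) i j ≤ tropPow (prodM L) t i j := by
    rw [tropPow_mul]
    exact tropPow_mono h1 t i j
  exact le_trans (iInf_le _ (L.length * t)) h2

end Aux

private lemma call_transpose {n : ℕ} (k l : Fin n) (a : ℝ≥0∞) : (call k l a)ᵀ = call k l a := by
  funext i j
  simp only [Matrix.transpose_apply, call]
  rcases eq_or_ne i j with rfl | hij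
  · simp
  · rw [if_neg hij, if_neg (Ne.symm hij)]
    exact if_congr (by tauto) rfl rfl

private lemma call_diag {n : ℕ} (k l : Fin n) (a : ℝ≥0∞) (i : Fin n) : call k l a i i = 0 :=
  if_pos rfl

open Matrix in
theorem kleene_of_gossip_is_metric {n : ℕ}
    (l : List (Fin n × Fin n × ℝ≥0∞)) (hd : ∀ t ∈ l, t.1 ≠ t.2.1) :
    kleene (prodC l) = (kleene (prodC l))ᵀ ∧
    (∀ i, kleene (prodC l) i i = 0) ∧
    (∀ i j k, kleene (prodC l) i k ≤ kleene (prodC l) i j + kleene (prodC l) j k) := by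
  set Ms : List (Matrix (Fin n) (Fin n) ℝ≥0∞) := l.map fun t => call t.1 t.2.1 t.2.2 with hMs
  have hPM : prodC l = prodM Ms := rfl
  have hz : ∀ M ∈ Ms, ∀ i, M i i = 0 := by
    intro M hM i
    rw [hMs, List.mem_map] at hM
    obtain ⟨t, -, rfl⟩ := hM
    exact call_diag _ _ _ _
  have hsym : ∀ M ∈ Ms, Mᵀ = M := by
    intro M hM
    rw [hMs, List.mem_map] at hM
    obtain ⟨t, -, rfl⟩ := hM
    exact call_transpose _ _ _
  have hzrev : ∀ M ∈ Ms.reverse, ∀ i, M i i = 0 := fun M hM => hz M (List.mem_reverse.mp hM)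
  have hkrev : kleene (prodM Ms.reverse) = kleene (prodM Ms) := by
    funext i j
    apply le_antisymm (kleene_reverse_le hz i j)
    have := kleene_reverse_le hzrev i j
    rwa [List.reverse_reverse] at this
  refine ⟨?_, ?_, ?_⟩
  · -- symmetry
    funext i j
    have h1 : (kleene (prodC l))ᵀ = kleene ((prodC l)ᵀ) := by
      funext i j
      simp only [Matrix.transpose_apply, kleene]
      exact iInf_congr fun s => by rw [← tropPow_transpose]; rfl
    rw [h1, hPM, prodM_reverse_transpose hsym, hkrev]
  · -- zero diagonal
    intro i
    refine le_antisymm (le_trans (iInf_le _ 0) ?_) zero_le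
    simp [tropPow, tropId]
  · -- triangle inequality
    intro i j k
    rw [show kleene (prodC l) i j = ⨅ s : ℕ, tropPow (prodC l) s i j from rfl,
      show kleene (prodC l) j k = ⨅ s : ℕ, tropPow (prodC l) s j k from rfl,
      ENNReal.iInf_add]
    apply le_iInf
    intro s
    rw [ENNReal.add_iInf]
    apply le_iInf
    intro t
    calc kleene (prodC l) i k ≤ tropPow (prodC l) (s + t) i k := iInf_le _ _
      _ = tropMul (tropPow (prodC l) s) (tropPow (prodC l) t) i k := by rw [tropPow_add]
      _ ≤ tropPow (prodC l) s i j + tropPow (prodC l) t j k := Finset.inf_le (Finset.mem_univ j)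
end

section
/- In any irredundant tropical product of lossy phone call matrices C_{I_1}(a_1) ⊙ ⋯ ⊙ C_{I_k}(a_k) over G_n (meaning that removing any single factor changes the product), the number of factors k is at most n²(n−1)/2. -/
open scoped ENNReal

namespace IrredAux

attribute [local instance] Classical.propDecidable

variable {n : ℕ}

abbrev Call (n : ℕ) := Fin n × Fin n × ℝ≥0∞

noncomputable def stepc (c : Call n) (x : Fin n → ℝ≥0∞) : Fin n → ℝ≥0∞ :=
  fun w => if w = c.1 then min (x c.1) (x c.2.1 + c.2.2)
    else if w = c.2.1 then min (x c.2.1) (x c.1 + c.2.2) else x w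

noncomputable def proc (j : Fin n) (L : List (Call n)) : Fin n → ℝ≥0∞ :=
  L.foldr stepc (fun w => if w = j then 0 else ⊤)

noncomputable def oth (c : Call n) (w : Fin n) : Fin n := if w = c.1 then c.2.1 else c.1

lemma stepc_le (c : Call n) (x : Fin n → ℝ≥0∞) : stepc c x ≤ x := by
  intro w
  unfold stepc
  split_ifs with h1 h2
  · subst h1; exact min_le_left _ _
  · subst h2; exact min_le_left _ _
  · exact le_rfl

lemma stepc_mono {c : Call n} {x y : Fin n → ℝ≥0∞} (h : x ≤ y) : stepc c x ≤ stepc c y := by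
  intro w
  unfold stepc
  split_ifs with h1 h2
  · exact min_le_min (h _) (add_le_add (h _) le_rfl)
  · exact min_le_min (h _) (add_le_add (h _) le_rfl)
  · exact h w

lemma stepc_endpoint {c : Call n} {w : Fin n} (hw : w = c.1 ∨ w = c.2.1)
    (x : Fin n → ℝ≥0∞) : stepc c x w = min (x w) (x (oth c w) + c.2.2) := by
  unfold stepc oth
  rcases hw with h | h
  · rw [if_pos h, if_pos h, h]
  · by_cases h1 : w = c.1
    · rw [if_pos h1, if_pos h1, h1]
    · rw [if_neg h1, if_pos h, if_neg h1, h]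

lemma stepc_other {c : Call n} {w : Fin n} (h1 : w ≠ c.1) (h2 : w ≠ c.2.1)
    (x : Fin n → ℝ≥0∞) : stepc c x w = x w := by
  unfold stepc; rw [if_neg h1, if_neg h2]

lemma inf_call (p q : Fin n) (a : ℝ≥0∞) (g : Fin n → ℝ≥0∞) (i : Fin n) :
    (Finset.univ.inf fun m => call p q a i m + g m) = stepc (p, q, a) g i := by
  apply le_antisymm
  · have hself : (Finset.univ.inf fun m => call p q a i m + g m) ≤ g i := by
      refine le_trans (Finset.inf_le (Finset.mem_univ i)) ?_
      simp [call]
    unfold stepc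
    simp only
    split_ifs with h1 h2
    · -- i = p
      subst h1
      refine le_min hself ?_
      rcases eq_or_ne i q with rfl | hpq
      · exact le_trans hself le_self_add
      · refine le_trans (Finset.inf_le (Finset.mem_univ q)) ?_
        have : call i q a i q = a := by
          simp [call, hpq]
        rw [this, add_comm]
    · -- i = q, i ≠ p
      subst h2
      refine le_min hself ?_
      refine le_trans (Finset.inf_le (Finset.mem_univ p)) ?_
      have : call p i a i p = a := by
        simp [call, h1, Ne.symm h1]
      rw [this, add_comm]
    · exact hself
  · apply Finset.le_inf
    intro m _
    by_cases him : i = m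
    · subst him
      have : call p q a i i = 0 := by simp [call]
      rw [this, zero_add]
      exact stepc_le _ _ _
    · by_cases hc : (i = p ∧ m = q) ∨ (i = q ∧ m = p)
      · have hca : call p q a i m = a := by
          simp only [call]
          rw [if_neg him, if_pos hc]
        rw [hca]
        unfold stepc
        split_ifs with h1 h2
        · -- i = p; then m = q (since if i=q∧m=p with i=p then m=p=i contra him)
          have hm : m = q := by
            rcases hc with ⟨_, h⟩ | ⟨hiq, hmp⟩
            · exact h
            · exact absurd (hmp.trans h1.symm).symm him
          subst hm
          exact le_trans (min_le_right _ _) (by rw [add_comm])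
        · have hm : m = p := by
            rcases hc with ⟨hip, _⟩ | ⟨_, h⟩
            · exact absurd hip h1
            · exact h
          subst hm
          exact le_trans (min_le_right _ _) (by rw [add_comm])
        · rcases hc with ⟨hip, _⟩ | ⟨hiq, _⟩
          · exact absurd hip h1
          · exact absurd hiq h2
      · have : call p q a i m = ⊤ := by
          simp only [call]
          rw [if_neg him, if_neg hc]
        rw [this, top_add]
        exact le_top

lemma prodC_eq_proc (L : List (Call n)) (j : Fin n) : ∀ i, prodC L i j = proc j L i := by
  induction L with
  | nil =>
      intro i
      simp [prodC, proc, tropId]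
  | cons c L ih =>
      intro i
      have h1 : prodC (c :: L) i j
          = Finset.univ.inf fun m => call c.1 c.2.1 c.2.2 i m + prodC L m j := by
        simp only [prodC, List.map_cons, List.foldr_cons]
        rfl
      have h2 : proc j (c :: L) i = stepc c (proc j L) i := by
        simp only [proc, List.foldr_cons]
      rw [h1, h2]
      have : (fun m => call c.1 c.2.1 c.2.2 i m + prodC L m j)
          = fun m => call c.1 c.2.1 c.2.2 i m + proc j L m := by
        funext m; rw [ih m]
      rw [this]
      have := inf_call c.1 c.2.1 c.2.2 (proc j L) i
      simpa using this

variable (l : List (Call n)) (j : Fin n)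

noncomputable def X (m : ℕ) : Fin n → ℝ≥0∞ := proc j (l.drop m)

def dropsAt (m : ℕ) (w : Fin n) : Prop := X l j m w < X l j (m + 1) w

def impAt (m : ℕ) : Prop := ∃ w, dropsAt l j m w

noncomputable def cAt (m : ℕ) : Call n := l.getD m (j, j, 0)

noncomputable def vAt (m : ℕ) : Fin n := if h : impAt l j m then h.choose else j

noncomputable def uAt (m : ℕ) : Fin n := oth (cAt l j m) (vAt l j m)

lemma X_step {m : ℕ} (hm : m < l.length) :
    X l j m = stepc (cAt l j m) (X l j (m + 1)) := by
  unfold X cAt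
  rw [List.drop_eq_getElem_cons hm, List.getD_eq_getElem l _ hm]
  rfl

lemma X_stable {m : ℕ} (hm : l.length ≤ m) : X l j m = X l j (m + 1) := by
  unfold X
  rw [List.drop_eq_nil_of_le hm, List.drop_eq_nil_of_le (le_trans hm (Nat.le_succ m))]

lemma X_le_succ (m : ℕ) : X l j m ≤ X l j (m + 1) := by
  by_cases hm : m < l.length
  · rw [X_step l j hm]; exact stepc_le _ _
  · rw [X_stable l j (le_of_not_gt hm)]

lemma X_mono {m m' : ℕ} (h : m ≤ m') : X l j m ≤ X l j m' := by
  induction h with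
  | refl => exact le_rfl
  | step h ih => exact le_trans ih (X_le_succ l j _)

lemma X_j (m : ℕ) : X l j m j = 0 := by
  apply le_antisymm _ zero_le
  have h1 : X l j m j ≤ X l j (max m l.length) j := X_mono l j (le_max_left _ _) j
  have h2 : X l j (max m l.length) j = 0 := by
    unfold X
    rw [List.drop_eq_nil_of_le (le_max_right _ _)]
    simp [proc]
  rw [h2] at h1
  exact h1

lemma drop_lt_len {m : ℕ} {w : Fin n} (h : dropsAt l j m w) : m < l.length := by
  by_contra hc
  unfold dropsAt at h
  rw [X_stable l j (le_of_not_gt hc)] at h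
  exact lt_irrefl _ h

lemma drop_endpoint {m : ℕ} {w : Fin n} (h : dropsAt l j m w) :
    w = (cAt l j m).1 ∨ w = (cAt l j m).2.1 := by
  by_contra hc
  push_neg at hc
  unfold dropsAt at h
  rw [X_step l j (drop_lt_len l j h), stepc_other hc.1 hc.2] at h
  exact lt_irrefl _ h

lemma drop_eval {m : ℕ} {w : Fin n} (h : dropsAt l j m w) :
    X l j m w = X l j (m + 1) (oth (cAt l j m) w) + (cAt l j m).2.2 ∧
    X l j (m + 1) (oth (cAt l j m) w) + (cAt l j m).2.2 < X l j (m + 1) w := by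
  have hep := drop_endpoint l j h
  have hlt := h
  unfold dropsAt at hlt
  have hstep : X l j m w = min (X l j (m+1) w) (X l j (m+1) (oth (cAt l j m) w) + (cAt l j m).2.2) := by
    rw [X_step l j (drop_lt_len l j h)]
    exact stepc_endpoint hep _
  rcases min_cases (X l j (m+1) w) (X l j (m+1) (oth (cAt l j m) w) + (cAt l j m).2.2) with
    ⟨heq, _⟩ | ⟨heq, _⟩
  · rw [hstep, heq] at hlt; exact absurd hlt (lt_irrefl _)
  · rw [hstep, heq] at hlt ⊢
    exact ⟨rfl, hlt⟩

lemma drop_ne_oth {m : ℕ} {w : Fin n} (h : dropsAt l j m w) : w ≠ oth (cAt l j m) w := by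
  intro he
  have hd := drop_eval l j h
  rw [← he] at hd
  have h1 : X l j (m+1) w ≤ X l j m w := by
    rw [hd.1]; exact le_self_add
  exact absurd (lt_of_le_of_lt h1 h) (lt_irrefl _)

lemma oth_endpoint {c : Call n} {w : Fin n} (h : w = c.1 ∨ w = c.2.1) :
    (w = c.1 ∧ oth c w = c.2.1) ∨ (w = c.2.1 ∧ oth c w = c.1 ∧ w ≠ c.1) := by
  unfold oth
  by_cases h1 : w = c.1
  · left; exact ⟨h1, if_pos h1⟩
  · right
    rcases h with h | h
    · exact absurd h h1
    · exact ⟨h, if_neg h1, h1⟩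

lemma drop_unique {m : ℕ} {w w' : Fin n} (h : dropsAt l j m w) (h' : dropsAt l j m w') :
    w = w' := by
  by_contra hne
  have he := drop_endpoint l j h
  have he' := drop_endpoint l j h'
  set c := cAt l j m with hc
  -- show oth c w = w' and oth c w' = w
  have hoth : oth c w = w' ∧ oth c w' = w := by
    rcases oth_endpoint he with ⟨h1, h2⟩ | ⟨h1, h2, h3⟩
    · rcases oth_endpoint he' with ⟨h1', h2'⟩ | ⟨h1', h2', h3'⟩
      · exact absurd (h1.trans h1'.symm) hne
      · exact ⟨h2.trans h1'.symm, h2'.trans h1.symm⟩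
    · rcases oth_endpoint he' with ⟨h1', h2'⟩ | ⟨h1', h2', h3'⟩
      · exact ⟨h2.trans h1'.symm, h2'.trans h1.symm⟩
      · exact absurd (h1.trans h1'.symm) hne
  have hd := (drop_eval l j h)
  have hd' := (drop_eval l j h')
  rw [hoth.1] at hd
  rw [hoth.2] at hd'
  -- hd.2 : X (m+1) w' + a < X (m+1) w ; hd'.2 : X (m+1) w + a < X (m+1) w'
  have h1 : X l j (m+1) w' ≤ X l j (m+1) w' + c.2.2 := le_self_add
  have h2 : X l j (m+1) w ≤ X l j (m+1) w + c.2.2 := le_self_add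
  have : X l j (m+1) w < X l j (m+1) w :=
    lt_trans (lt_of_le_of_lt h2 hd'.2) (lt_of_le_of_lt h1 hd.2)
  exact lt_irrefl _ this

lemma vAt_spec {m : ℕ} (h : impAt l j m) : dropsAt l j m (vAt l j m) := by
  unfold vAt
  rw [dif_pos h]
  exact h.choose_spec

lemma drop_vAt {m : ℕ} {w : Fin n} (h : dropsAt l j m w) : vAt l j m = w :=
  drop_unique l j (vAt_spec l j ⟨w, h⟩) h

lemma val_drop {m : ℕ} (h : impAt l j m) :
    X l j m (vAt l j m) = X l j (m + 1) (uAt l j m) + (cAt l j m).2.2 :=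
  (drop_eval l j (vAt_spec l j h)).1

lemma v_ne_u {m : ℕ} (h : impAt l j m) : vAt l j m ≠ uAt l j m :=
  drop_ne_oth l j (vAt_spec l j h)

lemma vAt_ne_j {m : ℕ} (h : impAt l j m) : vAt l j m ≠ j := by
  intro he
  have hd := vAt_spec l j h
  unfold dropsAt at hd
  rw [he, X_j, X_j] at hd
  exact lt_irrefl _ hd

lemma X_const {w : Fin n} {m m' : ℕ} (hmm : m ≤ m')
    (h : ∀ ρ, m ≤ ρ → ρ < m' → ¬ dropsAt l j ρ w) : X l j m w = X l j m' w := by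
  induction hmm with
  | refl => rfl
  | @step k hk ih =>
      have h1 : X l j m w = X l j k w := ih (fun ρ h1 h2 => h ρ h1 (lt_trans h2 (Nat.lt_succ_self _)))
      rw [h1]
      rcases lt_or_eq_of_le (X_le_succ l j k w) with hlt | heq
      · exact absurd hlt (h k hk (Nat.lt_succ_self _))
      · exact heq

lemma drop_strict {s m'' : ℕ} {w : Fin n} (h : dropsAt l j s w) (hs : s + 1 ≤ m'') :
    X l j s w < X l j m'' w :=
  lt_of_lt_of_le h (X_mono l j hs w)

def window (w : Fin n) (s m : ℕ) : Prop := ∀ ρ, s ≤ ρ → ρ < m → ¬ dropsAt l j ρ w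

inductive Alive : ℕ → Prop
  | terminal (m : ℕ) (h1 : impAt l j m) (h2 : ∀ s, s < m → ¬ dropsAt l j s (vAt l j m)) :
      Alive m
  | push (m s : ℕ) (h1 : impAt l j m) (hs : s < m) (ha : Alive s)
      (hu : uAt l j s = vAt l j m) (hw : window l j (vAt l j m) s m) : Alive m

def valid (s m : ℕ) : Prop :=
  s < m ∧ Alive l j s ∧ uAt l j s = vAt l j m ∧ window l j (vAt l j m) s m

lemma alive_imp {m : ℕ} (h : Alive l j m) : impAt l j m := by
  cases h with
  | terminal m h1 h2 => exact h1
  | push m s h1 hs ha hu hw => exact h1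

lemma alive_dest {m : ℕ} (h : Alive l j m) :
    (∀ s, s < m → ¬ dropsAt l j s (vAt l j m)) ∨ ∃ s, valid l j s m := by
  cases h with
  | terminal m h1 h2 => exact Or.inl h2
  | push m s h1 hs ha hu hw => exact Or.inr ⟨s, hs, ha, hu, hw⟩

-- downward induction helper
lemma down_ind (P : ℕ → Prop) (r : ℕ) (base : P r)
    (step : ∀ m, m < r → P (m + 1) → P m) : ∀ m, m ≤ r → P m := by
  have key : ∀ d m, m + d = r → P m := by
    intro d
    induction d with
    | zero =>
        intro m h
        have : m = r := by omega
        rw [this]; exact base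
    | succ d ih =>
        intro m h
        exact step m (by omega) (ih (m + 1) (by omega))
  intro m hm
  exact key (r - m) m (by omega)

lemma drop_eraseIdx_self : ∀ (L : List (Call n)) (r : ℕ), (L.eraseIdx r).drop r = L.drop (r + 1) := by
  intro L
  induction L with
  | nil => intro r; simp
  | cons a L ih =>
      intro r
      cases r with
      | zero => simp [List.eraseIdx]
      | succ r =>
          simp only [List.eraseIdx, List.drop_succ_cons]
          exact ih r

lemma erase_eq_of_not_alive {r : ℕ} (hr : r < l.length)
    (hfin : ∀ t ∈ l, t.2.2 ≠ ⊤) (hna : ¬ Alive l j r) :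
    proc j (l.eraseIdx r) = proc j l := by
  set Y : ℕ → Fin n → ℝ≥0∞ := fun m => proc j ((l.eraseIdx r).drop m) with hY
  have hlenE : (l.eraseIdx r).length = l.length - 1 := by
    rw [List.length_eraseIdx]
    simp [hr]
  have Y_r : Y r = X l j (r + 1) := by
    rw [hY]
    simp only
    rw [drop_eraseIdx_self]
    rfl
  have Y_step : ∀ m, m < r → Y m = stepc (cAt l j m) (Y (m + 1)) := by
    intro m hm
    have hmE : m < (l.eraseIdx r).length := by omega
    have hgE : (l.eraseIdx r)[m] = l[m]'(by omega) := by
      rw [List.getElem_eraseIdx]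
      simp [hm]
    rw [hY]
    simp only
    rw [List.drop_eq_getElem_cons hmE, hgE]
    have : cAt l j m = l[m]'(by omega) := List.getD_eq_getElem l _ (by omega)
    rw [this]
    rfl
  -- X ≤ Y on [0, r]
  have XleY : ∀ m, m ≤ r → X l j m ≤ Y m := by
    refine down_ind _ r ?_ ?_
    · rw [Y_r]
      exact X_le_succ l j r
    · intro m hm ih
      rw [X_step l j (by omega), Y_step m hm]
      exact stepc_mono ih
  -- main invariant
  have inv : ∀ m, m ≤ r → ∀ w, X l j m w < Y m w →
      ∃ ρ, m ≤ ρ ∧ ρ ≤ r ∧ dropsAt l j ρ w ∧ ¬ Alive l j ρ ∧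
        (∀ ρ', m ≤ ρ' → ρ' < ρ → ¬ dropsAt l j ρ' w) := by
    refine down_ind _ r ?_ ?_
    · intro w hw
      rw [Y_r] at hw
      exact ⟨r, le_rfl, le_rfl, hw, hna, fun ρ' h1 h2 => absurd (lt_of_le_of_lt h1 h2) (lt_irrefl _)⟩
    · intro m hm ih
      intro w hw
      set c := cAt l j m with hc
      have hmlen : m < l.length := by omega
      have hXs : X l j m = stepc c (X l j (m + 1)) := X_step l j hmlen
      have hYs : Y m = stepc c (Y (m + 1)) := Y_step m hm
      by_cases hep : w = c.1 ∨ w = c.2.1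
      · -- endpoint
        have hXe : X l j m w = min (X l j (m+1) w) (X l j (m+1) (oth c w) + c.2.2) := by
          rw [hXs]; exact stepc_endpoint hep _
        have hYe : Y m w = min (Y (m+1) w) (Y (m+1) (oth c w) + c.2.2) := by
          rw [hYs]; exact stepc_endpoint hep _
        by_cases hdm : dropsAt l j m w
        · -- drop at m
          have hde := drop_eval l j hdm
          rw [← hc] at hde
          have hXval : X l j m w = X l j (m+1) (oth c w) + c.2.2 := hde.1
          have hYle : Y m w ≤ Y (m+1) (oth c w) + c.2.2 := by
            rw [hYe]; exact min_le_right _ _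
          have hfa : c.2.2 ≠ ⊤ := hfin _ (by
            rw [hc]
            unfold cAt
            rw [List.getD_eq_getElem l _ hmlen]
            exact List.getElem_mem hmlen)
          have hlt' : X l j (m+1) (oth c w) < Y (m+1) (oth c w) := by
            have h1 : X l j (m+1) (oth c w) + c.2.2 < Y (m+1) (oth c w) + c.2.2 :=
              lt_of_lt_of_le (by rw [← hXval]; exact lt_of_lt_of_le hw hYle) le_rfl
            exact (ENNReal.add_lt_add_iff_right hfa).mp h1
          obtain ⟨ρ, hρ1, hρ2, hρ3, hρ4, hρ5⟩ := ih (oth c w) hlt'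
          -- claim : ¬ Alive m
          have hnam : ¬ Alive l j m := by
            intro ham
            apply hρ4
            have hvm : vAt l j m = w := drop_vAt l j hdm
            have hvρ : vAt l j ρ = oth c w := drop_vAt l j hρ3
            have hum : uAt l j m = oth c w := by
              unfold uAt
              rw [hvm, ← hc]
            refine Alive.push ρ m ⟨oth c w, hρ3⟩ (by omega) ham (by rw [hum, hvρ]) ?_
            intro σ h1 h2
            rw [hvρ]
            rcases Nat.eq_or_lt_of_le h1 with rfl | h1'
            · intro hdσ
              have : w = oth c w := by
                have := drop_unique l j hdm hdσ
                exact this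
              exact absurd this (drop_ne_oth l j hdm)
            · exact hρ5 σ h1' h2
          exact ⟨m, le_rfl, by omega, hdm, hnam, fun ρ' h1 h2 => absurd (lt_of_le_of_lt h1 h2) (lt_irrefl _)⟩
        · -- no drop at m at w
          have hXw : X l j m w = X l j (m+1) w := by
            rcases lt_or_eq_of_le (X_le_succ l j m w) with h1 | h1
            · exact absurd h1 hdm
            · exact h1
          have hYle : Y m w ≤ Y (m+1) w := by
            rw [hYs]; exact stepc_le _ _ _
          have hlt' : X l j (m+1) w < Y (m+1) w := lt_of_lt_of_le (by rw [← hXw]; exact hw) hYle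
          obtain ⟨ρ, hρ1, hρ2, hρ3, hρ4, hρ5⟩ := ih w hlt'
          refine ⟨ρ, by omega, hρ2, hρ3, hρ4, ?_⟩
          intro ρ' h1 h2
          rcases Nat.eq_or_lt_of_le h1 with rfl | h1'
          · exact hdm
          · exact hρ5 ρ' h1' h2
      · -- not an endpoint
        push_neg at hep
        have hXw : X l j m w = X l j (m+1) w := by
          rw [hXs]; exact stepc_other hep.1 hep.2 _
        have hYw : Y m w = Y (m+1) w := by
          rw [hYs]; exact stepc_other hep.1 hep.2 _
        rw [hXw, hYw] at hw
        obtain ⟨ρ, hρ1, hρ2, hρ3, hρ4, hρ5⟩ := ih w hw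
        refine ⟨ρ, by omega, hρ2, hρ3, hρ4, ?_⟩
        intro ρ' h1 h2
        rcases Nat.eq_or_lt_of_le h1 with rfl | h1'
        · intro hd
          exact absurd (drop_endpoint l j hd) (by
            rw [← hc]
            push_neg
            exact hep)
        · exact hρ5 ρ' h1' h2
  -- conclude
  by_contra hne
  have : ∃ w, X l j 0 w < Y 0 w := by
    by_contra hno
    push_neg at hno
    apply hne
    funext w
    exact le_antisymm (hno w) (XleY 0 (Nat.zero_le _) w)
  obtain ⟨w, hw⟩ := this
  obtain ⟨ρ, _, hρ2, hρ3, hρ4, hρ5⟩ := inv 0 (Nat.zero_le _) w hw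
  apply hρ4
  have hv : vAt l j ρ = w := drop_vAt l j hρ3
  refine Alive.terminal ρ ⟨w, hρ3⟩ ?_
  intro s hs
  rw [hv]
  exact hρ5 s (Nat.zero_le _) hs

noncomputable def zf : ℕ → Fin n :=
  fun m =>
    if h : ∃ s, valid l j s m then zf h.choose else vAt l j m
termination_by m => m
decreasing_by exact h.choose_spec.1

inductive Reach : ℕ → ℕ → Prop
  | refl (m : ℕ) : Reach m m
  | tail (m m' : ℕ) (h : ∃ s, valid l j s m) (hr : Reach h.choose m') : Reach m m'

lemma no_merge {s m m' : ℕ} (him : impAt l j m) (him' : impAt l j m')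
    (hv : valid l j s m) (hv' : valid l j s m') : m = m' := by
  by_contra hne
  have hvv : vAt l j m = vAt l j m' := by
    rw [← hv.2.2.1, ← hv'.2.2.1]
  rcases lt_trichotomy m m' with h | h | h
  · exact hv'.2.2.2 m (le_of_lt hv.1) h (by rw [← hvv]; exact vAt_spec l j him)
  · exact hne h
  · exact hv.2.2.2 m' (le_of_lt hv'.1) h (by rw [hvv]; exact vAt_spec l j him')

lemma reach_le {m m' : ℕ} (h : Reach l j m m') : m' ≤ m := by
  induction h with
  | refl m => exact le_rfl
  | tail m m'' h hr ih => exact le_trans ih (le_of_lt h.choose_spec.1)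

lemma reach_alive {m m' : ℕ} (ha : Alive l j m) (h : Reach l j m m') : Alive l j m' := by
  induction h with
  | refl m => exact ha
  | tail m m'' h hr ih => exact ih h.choose_spec.2.1

lemma zf_spec {m : ℕ} (ha : Alive l j m) :
    ∃ τ, Reach l j m τ ∧ ¬(∃ s, valid l j s τ) ∧ zf l j m = vAt l j τ ∧ Alive l j τ := by
  induction m using Nat.strong_induction_on with
  | _ m ih =>
      by_cases h : ∃ s, valid l j s m
      · obtain ⟨τ, h1, h2, h3, h4⟩ := ih h.choose h.choose_spec.1 h.choose_spec.2.1
        refine ⟨τ, Reach.tail m τ h h1, h2, ?_, h4⟩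
        rw [zf]
        rw [dif_pos h]
        exact h3
      · refine ⟨m, Reach.refl m, h, ?_, ha⟩
        rw [zf]
        rw [dif_neg h]

lemma val_mono {s m : ℕ} (hv : valid l j s m) (him : impAt l j m) :
    X l j m (vAt l j m) ≤ X l j s (vAt l j s) := by
  have his : impAt l j s := alive_imp l j hv.2.1
  have h1 : X l j s (vAt l j s) = X l j (s+1) (uAt l j s) + (cAt l j s).2.2 :=
    val_drop l j his
  have hsm := hv.1
  have h2 : X l j (s+1) (vAt l j m) = X l j m (vAt l j m) := by
    refine X_const l j (by omega) ?_
    intro ρ hρ1 hρ2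
    exact hv.2.2.2 ρ (by omega) hρ2

  calc X l j m (vAt l j m) = X l j (s+1) (vAt l j m) := h2.symm
    _ = X l j (s+1) (uAt l j s) := by rw [hv.2.2.1]
    _ ≤ X l j (s+1) (uAt l j s) + (cAt l j s).2.2 := le_self_add
    _ = X l j s (vAt l j s) := h1.symm

lemma reach_val {m τ : ℕ} (h : Reach l j m τ) (ha : Alive l j m) :
    X l j m (vAt l j m) ≤ X l j τ (vAt l j τ) := by
  induction h with
  | refl m => exact le_rfl
  | tail m m'' h hr ih =>
      have hs := h.choose_spec
      exact le_trans (val_mono l j hs (alive_imp l j ha)) (ih hs.2.1)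

lemma reach_ne_v {m τ : ℕ} (ha : Alive l j m) (h : Reach l j m τ) (hne : m ≠ τ) :
    vAt l j τ ≠ vAt l j m := by
  intro he
  have hττ : τ < m := lt_of_le_of_ne (reach_le l j h) (Ne.symm hne)
  have haτ : Alive l j τ := reach_alive l j ha h
  have hd : dropsAt l j τ (vAt l j τ) := vAt_spec l j (alive_imp l j haτ)
  have h1 : X l j τ (vAt l j τ) < X l j m (vAt l j τ) := drop_strict l j hd (by omega)
  rw [he] at h1
  exact absurd (lt_of_le_of_lt (le_trans (reach_val l j h ha) (le_of_eq (by rw [he]))) h1)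
    (lt_irrefl _)

lemma terminal_lastdrop {τ : ℕ} (ha : Alive l j τ) (hno : ¬ ∃ s, valid l j s τ) :
    ∀ s, s < τ → ¬ dropsAt l j s (vAt l j τ) := by
  rcases alive_dest l j ha with h | h
  · exact h
  · exact absurd h hno

lemma lastdrop_unique {τ τ' : ℕ} (ha : Alive l j τ) (ha' : Alive l j τ')
    (hno : ¬ ∃ s, valid l j s τ) (hno' : ¬ ∃ s, valid l j s τ')
    (hv : vAt l j τ = vAt l j τ') : τ = τ' := by
  rcases lt_trichotomy τ τ' with h | h | h
  · exact absurd (by rw [← hv]; exact vAt_spec l j (alive_imp l j ha))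
      (terminal_lastdrop l j ha' hno' τ h)
  · exact h
  · exact absurd (by rw [hv]; exact vAt_spec l j (alive_imp l j ha'))
      (terminal_lastdrop l j ha hno τ' h)

lemma reach_cases {m e : ℕ} (h : Reach l j m e) :
    m = e ∨ ∃ (d : ℕ) (hd : ∃ s, valid l j s d), Reach l j m d ∧ hd.choose = e := by
  induction h with
  | refl m => exact Or.inl rfl
  | tail m m'' h hr ih =>
      rcases ih with he | ⟨d, hd, h1, h2⟩
      · exact Or.inr ⟨m, h, Reach.refl m, he⟩
      · exact Or.inr ⟨d, hd, Reach.tail m d h h1, h2⟩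

lemma reach_total {a c : ℕ} (hac : Reach l j a c) :
    ∀ b, Alive l j a → Alive l j b → Reach l j b c → Reach l j a b ∨ Reach l j b a := by
  induction hac with
  | refl m => exact fun b _ _ hbc => Or.inr hbc
  | tail m m'' h hr ih =>
      intro b ham hab hbc
      rcases ih b h.choose_spec.2.1 hab hbc with h1 | h1
      · exact Or.inl (Reach.tail m b h h1)
      · -- h1 : Reach b h.choose
        rcases reach_cases l j h1 with he | ⟨d, hd, h2, h3⟩
        · refine Or.inl (Reach.tail m b h ?_)
          rw [← he]
          exact Reach.refl _
        · -- hd.choose = h.choose, valid for both d and m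
          have hda : Alive l j d := reach_alive l j hab h2
          have : d = m := by
            refine no_merge l j (alive_imp l j hda) (alive_imp l j ham) hd.choose_spec ?_
            rw [h3]
            exact h.choose_spec
          rw [← this]
          exact Or.inr h2

noncomputable def Mp (m : ℕ) : Finset (Fin n) :=
  if _ : ∃ s, valid l j s m then {vAt l j m, zf l j m} else {vAt l j m, j}

lemma alive_card :
    ((Finset.range l.length).filter fun m => Alive l j m).card ≤ n.choose 2 := by
  have hcard : (Finset.univ.powersetCard 2 : Finset (Finset (Fin n))).card = n.choose 2 := by
    rw [Finset.card_powersetCard]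
    simp
  rw [← hcard]
  refine Finset.card_le_card_of_injOn (Mp l j) ?_ ?_
  · -- maps into
    intro m hm
    have ha : Alive l j m := (Finset.mem_filter.mp hm).2
    rw [Finset.mem_coe, Finset.mem_powersetCard]
    constructor
    · exact Finset.subset_univ _
    · unfold Mp
      split_ifs with h
      · obtain ⟨τ, h1, h2, h3, h4⟩ := zf_spec l j ha
        have hτm : m ≠ τ := by
          rintro rfl
          exact h2 h
        rw [h3]
        exact Finset.card_pair (Ne.symm (reach_ne_v l j ha h1 hτm))
      · exact Finset.card_pair (vAt_ne_j l j (alive_imp l j ha))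
  · -- injective
    intro m hm m' hm' heq
    have ha : Alive l j m := (Finset.mem_filter.mp hm).2
    have ha' : Alive l j m' := (Finset.mem_filter.mp hm').2
    by_contra hne
    unfold Mp at heq
    by_cases h : ∃ s, valid l j s m <;> by_cases h' : ∃ s, valid l j s m'
    · -- both nonterminal
      rw [dif_pos h, dif_pos h'] at heq
      obtain ⟨τ, hτ1, hτ2, hτ3, hτ4⟩ := zf_spec l j ha
      obtain ⟨τ', hτ'1, hτ'2, hτ'3, hτ'4⟩ := zf_spec l j ha'
      have hτm : m ≠ τ := by rintro rfl; exact hτ2 h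
      have hτm' : m' ≠ τ' := by rintro rfl; exact hτ'2 h'
      have hvz : vAt l j m ≠ zf l j m := by
        rw [hτ3]; exact Ne.symm (reach_ne_v l j ha hτ1 hτm)
      have hvz' : vAt l j m' ≠ zf l j m' := by
        rw [hτ'3]; exact Ne.symm (reach_ne_v l j ha' hτ'1 hτm')
      -- case analysis on pair equality
      have hvm : vAt l j m = vAt l j m' ∨ vAt l j m = zf l j m' := by
        have : vAt l j m ∈ ({vAt l j m', zf l j m'} : Finset (Fin n)) := by
          rw [← heq]; exact Finset.mem_insert_self _ _
        simpa using this
      rcases hvm with hA | hB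
      · -- v = v', hence z = z'
        have hzz : zf l j m = zf l j m' := by
          have : zf l j m ∈ ({vAt l j m', zf l j m'} : Finset (Fin n)) := by
            rw [← heq]
            exact Finset.mem_insert_of_mem (Finset.mem_singleton_self _)
          rcases Finset.mem_insert.mp this with h1 | h1
          · exact absurd (hA.trans h1.symm) hvz
          · simpa using h1
        -- τ = τ'
        have hττ : τ = τ' := by
          refine lastdrop_unique l j hτ4 hτ'4 hτ2 hτ'2 ?_
          rw [← hτ3, ← hτ'3, hzz]
        rw [← hττ] at hτ'1
        rcases reach_total l j hτ1 m' ha ha' hτ'1 with h1 | h1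
        · exact (reach_ne_v l j ha h1 hne) hA.symm
        · exact (reach_ne_v l j ha' h1 (Ne.symm hne)) hA
      · -- crossed: v m = zf m' = vAt τ', and zf m = v m'
        have hzv : zf l j m = vAt l j m' := by
          have : zf l j m ∈ ({vAt l j m', zf l j m'} : Finset (Fin n)) := by
            rw [← heq]
            exact Finset.mem_insert_of_mem (Finset.mem_singleton_self _)
          rcases Finset.mem_insert.mp this with h1 | h1
          · exact h1
          · exact absurd (hB.trans ((by simpa using h1 : zf l j m = zf l j m')).symm) hvz
        -- vAt τ' = vAt m and vAt τ = vAt m'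
        have e1 : vAt l j τ' = vAt l j m := by rw [← hτ'3, ← hB]
        have e2 : vAt l j τ = vAt l j m' := by rw [← hτ3, hzv]
        -- τ' < m
        have hτ'm : τ' ≠ m := by
          rintro rfl
          exact hτ'2 h
        have hτ'lt : τ' < m := by
          rcases lt_trichotomy τ' m with hh | hh | hh
          · exact hh
          · exact absurd hh hτ'm
          · have hdm : dropsAt l j m (vAt l j τ') := by
              rw [e1]; exact vAt_spec l j (alive_imp l j ha)
            exact absurd hdm (terminal_lastdrop l j hτ'4 hτ'2 m hh)
        have hτm'2 : τ ≠ m' := by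
          rintro rfl
          exact hτ2 h'
        have hτlt : τ < m' := by
          rcases lt_trichotomy τ m' with hh | hh | hh
          · exact hh
          · exact absurd hh hτm'2
          · have hdm : dropsAt l j m' (vAt l j τ) := by
              rw [e2]; exact vAt_spec l j (alive_imp l j ha')
            exact absurd hdm (terminal_lastdrop l j hτ4 hτ2 m' hh)
        -- value cycle
        have c1 : X l j m (vAt l j m) ≤ X l j τ (vAt l j τ) := reach_val l j hτ1 ha
        have c2 : X l j τ (vAt l j τ) < X l j m' (vAt l j m') := by
          have hd : dropsAt l j τ (vAt l j τ) := vAt_spec l j (alive_imp l j hτ4)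
          have := drop_strict l j hd (by omega : τ + 1 ≤ m')
          rw [e2] at this ⊢
          exact this
        have c3 : X l j m' (vAt l j m') ≤ X l j τ' (vAt l j τ') := reach_val l j hτ'1 ha'
        have c4 : X l j τ' (vAt l j τ') < X l j m (vAt l j m) := by
          have hd : dropsAt l j τ' (vAt l j τ') := vAt_spec l j (alive_imp l j hτ'4)
          have := drop_strict l j hd (by omega : τ' + 1 ≤ m)
          rw [e1] at this ⊢
          exact this
        exact absurd (lt_trans (lt_of_le_of_lt c1 c2) (lt_of_le_of_lt c3 c4)) (lt_irrefl _)
    · -- m nonterminal, m' terminal : j in RHS not LHS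
      rw [dif_pos h, dif_neg h'] at heq
      obtain ⟨τ, hτ1, hτ2, hτ3, hτ4⟩ := zf_spec l j ha
      have hjin : j ∈ ({vAt l j m, zf l j m} : Finset (Fin n)) := by
        rw [heq]
        exact Finset.mem_insert_of_mem (Finset.mem_singleton_self _)
      rcases Finset.mem_insert.mp hjin with h1 | h1
      · exact vAt_ne_j l j (alive_imp l j ha) h1.symm
      · have h2 : j = vAt l j τ := by rw [← hτ3]; simpa using h1
        exact vAt_ne_j l j (alive_imp l j hτ4) h2.symm
    · -- m terminal, m' nonterminal
      rw [dif_neg h, dif_pos h'] at heq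
      obtain ⟨τ, hτ1, hτ2, hτ3, hτ4⟩ := zf_spec l j ha'
      have hjin : j ∈ ({vAt l j m', zf l j m'} : Finset (Fin n)) := by
        rw [← heq]
        exact Finset.mem_insert_of_mem (Finset.mem_singleton_self _)
      rcases Finset.mem_insert.mp hjin with h1 | h1
      · exact vAt_ne_j l j (alive_imp l j ha') h1.symm
      · have h2 : j = vAt l j τ := by rw [← hτ3]; simpa using h1
        exact vAt_ne_j l j (alive_imp l j hτ4) h2.symm
    · -- both terminal
      rw [dif_neg h, dif_neg h'] at heq
      have hvv : vAt l j m = vAt l j m' := by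
        have : vAt l j m ∈ ({vAt l j m', j} : Finset (Fin n)) := by
          rw [← heq]; exact Finset.mem_insert_self _ _
        rcases Finset.mem_insert.mp this with h1 | h1
        · exact h1
        · exact absurd (by simpa using h1) (vAt_ne_j l j (alive_imp l j ha))
      exact hne (lastdrop_unique l j ha ha' h h' hvv)

end IrredAux

theorem irredundant_length_bound {n : ℕ}
    (l : List (Fin n × Fin n × ℝ≥0∞))
    (hd : ∀ t ∈ l, t.1 ≠ t.2.1) (hfin : ∀ t ∈ l, t.2.2 ≠ ⊤)
    (hirr : ∀ r < l.length, prodC (l.eraseIdx r) ≠ prodC l) :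
    2 * l.length ≤ n ^ 2 * (n - 1) := by
  classical
  rcases Nat.eq_zero_or_pos n with rfl | hn
  · have hl : l.length = 0 := by
      by_contra hc
      apply hirr 0 (Nat.pos_of_ne_zero hc)
      funext i
      exact i.elim0
    simp [hl]
  · have key : ∀ r, r < l.length → ∃ jc : Fin n, IrredAux.Alive l jc r := by
      intro r hr
      by_contra hc
      push_neg at hc
      apply hirr r hr
      funext i jc
      rw [IrredAux.prodC_eq_proc, IrredAux.prodC_eq_proc,
        IrredAux.erase_eq_of_not_alive l jc hr hfin (hc jc)]
    set f : ℕ → Fin n := fun r =>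
      if h : ∃ jc : Fin n, IrredAux.Alive l jc r then h.choose else ⟨0, hn⟩ with hf
    have hcount : l.length ≤ n * Nat.choose n 2 := by
      have h1 : (Finset.range l.length).card = l.length := Finset.card_range _
      rw [← h1]
      rw [Finset.card_eq_sum_card_fiberwise
        (f := f) (s := Finset.range l.length) (t := Finset.univ) (fun x _ => Finset.mem_univ _)]
      have h3 : ∀ jc : Fin n,
          ((Finset.range l.length).filter fun r => f r = jc).card ≤ Nat.choose n 2 := by
        intro jc
        refine le_trans (Finset.card_le_card ?_) (IrredAux.alive_card l jc)
        intro r hr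
        rw [Finset.mem_filter] at hr ⊢
        refine ⟨hr.1, ?_⟩
        have hrlen := Finset.mem_range.mp hr.1
        have hex := key r hrlen
        have hfr : f r = jc := hr.2
        rw [hf] at hfr
        simp only [dif_pos hex] at hfr
        rw [← hfr]
        exact hex.choose_spec
      calc ∑ jc : Fin n, ((Finset.range l.length).filter fun r => f r = jc).card
          ≤ ∑ _jc : Fin n, Nat.choose n 2 := Finset.sum_le_sum (fun jc _ => h3 jc)
        _ = n * Nat.choose n 2 := by simp [Finset.sum_const, Fintype.card_fin]
    have h2c : 2 * Nat.choose n 2 = n * (n - 1) := by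
      have hdvd : 2 ∣ n * (n - 1) := by
        rcases n with _ | m
        · simp
        · simpa [Nat.succ_sub_one, mul_comm] using (Nat.even_mul_succ_self m).two_dvd
      rw [Nat.choose_two_right, Nat.mul_div_cancel' hdvd]
    calc 2 * l.length ≤ 2 * (n * Nat.choose n 2) := by omega
      _ = n * (2 * Nat.choose n 2) := by ring
      _ = n * (n * (n - 1)) := by rw [h2c]
      _ = n ^ 2 * (n - 1) := by ring
end

section
/- Every element of the lossy gossip monoid G_n can be written as a tropical product of at most n²(n−1)/2 lossy phone call matrices. -/
open scoped ENNReal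

-- ==================== walk machinery ====================
namespace Gossip

abbrev Call (n : ℕ) := Fin n × Fin n × ℝ≥0∞

variable {n : ℕ}

/-- the other endpoint of a call -/
def nxt (p : Fin n) (t : Call n) : Fin n := if p = t.1 then t.2.1 else t.1

/-- the call sequence is traversable starting at p -/
def Ok : Fin n → List (Call n) → Prop
  | _, [] => True
  | p, t :: s => (p = t.1 ∨ p = t.2.1) ∧ Ok (nxt p t) s

/-- destination of a walk -/
def dst : Fin n → List (Call n) → Fin n
  | p, [] => p
  | p, t :: s => dst (nxt p t) s

/-- cost of a walk -/
noncomputable def wcost (s : List (Call n)) : ℝ≥0∞ := (s.map (fun t => t.2.2)).sum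

/-- the vertices visited, excluding the final one -/
def pre : Fin n → List (Call n) → List (Fin n)
  | _, [] => []
  | p, t :: s => p :: pre (nxt p t) s

@[simp] lemma ok_nil (p : Fin n) : Ok p ([] : List (Call n)) := trivial
@[simp] lemma dst_nil (p : Fin n) : dst p ([] : List (Call n)) = p := rfl
@[simp] lemma wcost_nil : wcost ([] : List (Call n)) = 0 := rfl
@[simp] lemma pre_nil (p : Fin n) : pre p ([] : List (Call n)) = [] := rfl
@[simp] lemma ok_cons {p : Fin n} {t : Call n} {s : List (Call n)} :
    Ok p (t :: s) ↔ (p = t.1 ∨ p = t.2.1) ∧ Ok (nxt p t) s := Iff.rfl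
@[simp] lemma dst_cons {p : Fin n} {t : Call n} {s : List (Call n)} :
    dst p (t :: s) = dst (nxt p t) s := rfl
@[simp] lemma wcost_cons {t : Call n} {s : List (Call n)} :
    wcost (t :: s) = t.2.2 + wcost s := by simp [wcost]
@[simp] lemma pre_cons {p : Fin n} {t : Call n} {s : List (Call n)} :
    pre p (t :: s) = p :: pre (nxt p t) s := rfl

lemma ok_append {p : Fin n} {s₁ s₂ : List (Call n)} :
    Ok p (s₁ ++ s₂) ↔ Ok p s₁ ∧ Ok (dst p s₁) s₂ := by
  induction s₁ generalizing p with
  | nil => simp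
  | cons t s ih => simp [ih, and_assoc]

lemma dst_append {p : Fin n} {s₁ s₂ : List (Call n)} :
    dst p (s₁ ++ s₂) = dst (dst p s₁) s₂ := by
  induction s₁ generalizing p with
  | nil => simp
  | cons t s ih => simp [ih]

lemma wcost_append {s₁ s₂ : List (Call n)} :
    wcost (s₁ ++ s₂) = wcost s₁ + wcost s₂ := by
  simp [wcost]

lemma pre_append {p : Fin n} {s₁ s₂ : List (Call n)} :
    pre p (s₁ ++ s₂) = pre p s₁ ++ pre (dst p s₁) s₂ := by
  induction s₁ generalizing p with
  | nil => simp
  | cons t s ih => simp [ih]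

@[simp] lemma pre_length {p : Fin n} {s : List (Call n)} : (pre p s).length = s.length := by
  induction s generalizing p with
  | nil => rfl
  | cons t s ih => simp [ih]

lemma wcost_le_of_sublist {s₁ s₂ : List (Call n)} (h : s₁.Sublist s₂) : wcost s₁ ≤ wcost s₂ := by
  induction h with
  | slnil => exact le_refl _
  | cons t h ih => exact le_trans ih (by simp)
  | cons_cons t h ih => simp only [wcost_cons]; exact add_le_add_right ih _

end Gossip
namespace Gossip
variable {n : ℕ}

/-- set of walks from p to q using a sublist of l (time-respecting routes) -/
def WSet (l : List (Call n)) (p q : Fin n) : Set (List (Call n)) :=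
  {s | s.Sublist l ∧ Ok p s ∧ dst p s = q}

lemma wset_finite (l : List (Call n)) (p q : Fin n) : (WSet l p q).Finite := by
  apply Set.Finite.subset (l.sublists.finite_toSet)
  intro s hs
  simpa using hs.1

lemma wset_mono {l₁ l₂ : List (Call n)} (h : l₁.Sublist l₂) (p q : Fin n) :
    WSet l₁ p q ⊆ WSet l₂ p q := fun s hs => ⟨hs.1.trans h, hs.2⟩

lemma prodC_cons (t : Call n) (l : List (Call n)) :
    prodC (t :: l) = tropMul (call t.1 t.2.1 t.2.2) (prodC l) := rfl

lemma call_self (t : Call n) (p : Fin n) : call t.1 t.2.1 t.2.2 p p = 0 := by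
  simp [call]

lemma call_le_weight (t : Call n) (p v : Fin n)
    (h : (p = t.1 ∧ v = t.2.1) ∨ (p = t.2.1 ∧ v = t.1)) :
    call t.1 t.2.1 t.2.2 p v ≤ t.2.2 := by
  by_cases hpv : p = v
  · simp [call, hpv]
  · simp only [call, if_neg hpv, if_pos h]
    exact le_refl _

theorem prodC_entry (l : List (Call n)) (p q : Fin n) :
    prodC l p q = sInf (wcost '' WSet l p q) := by
  induction l generalizing p q with
  | nil =>
    by_cases hpq : p = q
    · subst hpq
      have : WSet ([] : List (Call n)) p p = {[]} := by
        ext s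
        constructor
        · rintro ⟨hs, -, -⟩
          simpa using List.sublist_nil.1 hs
        · rintro rfl
          exact ⟨List.Sublist.refl _, trivial, rfl⟩
      simp [prodC, tropId, this]
    · have : WSet ([] : List (Call n)) p q = ∅ := by
        ext s
        simp only [Set.mem_empty_iff_false, iff_false]
        rintro ⟨hs, -, hd⟩
        have : s = [] := List.sublist_nil.1 hs
        subst this
        exact hpq hd
      simp [prodC, tropId, this, hpq]
  | cons t l ih =>
    rw [prodC_cons]
    apply le_antisymm
    · -- tropMul ≤ every walk cost
      apply le_sInf
      rintro c ⟨s, ⟨hsub, hok, hdst⟩, rfl⟩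
      cases hsub with
      | cons _ hsub =>
        -- s avoids t  (s <+ l)
        have h1 : prodC l p q ≤ wcost s := by
          rw [ih]
          exact sInf_le ⟨s, ⟨hsub, hok, hdst⟩, rfl⟩
        calc (tropMul (call t.1 t.2.1 t.2.2) (prodC l)) p q
            ≤ call t.1 t.2.1 t.2.2 p p + prodC l p q := Finset.inf_le (Finset.mem_univ p)
          _ = prodC l p q := by rw [call_self]; simp
          _ ≤ wcost s := h1
      | cons_cons _ hsub =>
        -- s = t :: s'
        rename_i s'
        obtain ⟨hor, hok'⟩ := hok
        have hdst' : dst (nxt p t) s' = q := hdst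
        have h1 : prodC l (nxt p t) q ≤ wcost s' := by
          rw [ih]
          exact sInf_le ⟨s', ⟨hsub, hok', hdst'⟩, rfl⟩
        have hcall : call t.1 t.2.1 t.2.2 p (nxt p t) ≤ t.2.2 := by
          apply call_le_weight
          rcases hor with h | h
          · left; exact ⟨h, by simp [nxt, h]⟩
          · by_cases h2 : p = t.1
            · left; exact ⟨h2, by simp [nxt, h2]⟩
            · right; exact ⟨h, by simp [nxt, h2]⟩
        calc (tropMul (call t.1 t.2.1 t.2.2) (prodC l)) p q
            ≤ call t.1 t.2.1 t.2.2 p (nxt p t) + prodC l (nxt p t) q :=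
              Finset.inf_le (Finset.mem_univ _)
          _ ≤ t.2.2 + wcost s' := add_le_add hcall h1
          _ = wcost (t :: s') := (wcost_cons).symm
    · -- sInf ≤ tropMul : show sInf ≤ each inf term
      apply le_trans _ (le_refl _)
      apply Finset.le_inf
      intro v _
      by_cases hvp : v = p
      · subst hvp
        rw [call_self]
        simp only [zero_add]
        rw [ih]
        exact le_trans (sInf_le_sInf (Set.image_mono (wset_mono (List.sublist_cons_self t l) v q))) (le_refl _)
      · -- v ≠ p
        by_cases hor : (p = t.1 ∧ v = t.2.1) ∨ (p = t.2.1 ∧ v = t.1)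
        · -- call value is the weight
          have hcall : call t.1 t.2.1 t.2.2 p v = t.2.2 := by
            simp only [call, if_pos hor]
            rw [if_neg (fun h => hvp h.symm)]
          rw [hcall]
          by_cases hne : (WSet l v q).Nonempty
          · have hfin : (wcost '' WSet l v q).Finite := (wset_finite l v q).image _
            have hne' : (wcost '' WSet l v q).Nonempty := hne.image _
            obtain ⟨s₀, hs₀, hc₀⟩ : sInf (wcost '' WSet l v q) ∈ wcost '' WSet l v q :=
              hne'.csInf_mem hfin
            rw [ih, ← hc₀]
            apply sInf_le
            refine ⟨t :: s₀, ⟨List.cons_sublist_cons.2 hs₀.1, ?_, ?_⟩, wcost_cons⟩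
            · refine ⟨?_, ?_⟩
              · rcases hor with h | h
                · exact Or.inl h.1
                · exact Or.inr h.1
              · have : nxt p t = v := by
                  rcases hor with ⟨h1, h2⟩ | ⟨h1, h2⟩
                  · simp [nxt, h1, h2]
                  · by_cases h3 : p = t.1
                    · exfalso; apply hvp; rw [h2, ← h3, h1]
                    · simp [nxt, h3, h2]
                rw [this]
                exact hs₀.2.1
            · have : nxt p t = v := by
                rcases hor with ⟨h1, h2⟩ | ⟨h1, h2⟩
                · simp [nxt, h1, h2]
                · by_cases h3 : p = t.1
                  · exfalso; apply hvp; rw [h2, ← h3, h1]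
                  · simp [nxt, h3, h2]
              simp only [dst_cons, this]
              exact hs₀.2.2
          · have : WSet l v q = ∅ := Set.not_nonempty_iff_eq_empty.1 hne
            rw [ih, this]
            simp
        · have : call t.1 t.2.1 t.2.2 p v = ⊤ := by
            simp only [call, if_neg hor]
            rw [if_neg (fun h => hvp h.symm)]
          rw [this]
          simp
end Gossip
namespace Gossip
variable {n : ℕ}

lemma prodC_le_of_sublist {l₁ l₂ : List (Call n)} (h : l₁.Sublist l₂) (p q : Fin n) :
    prodC l₂ p q ≤ prodC l₁ p q := by
  rw [prodC_entry, prodC_entry]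
  exact sInf_le_sInf (Set.image_mono (wset_mono h p q))

lemma exists_opt {l : List (Call n)} {p q : Fin n} (h : prodC l p q ≠ ⊤) :
    ∃ s ∈ WSet l p q, wcost s = prodC l p q := by
  have hfin : (wcost '' WSet l p q).Finite := (wset_finite l p q).image _
  have hne : (wcost '' WSet l p q).Nonempty := by
    by_contra hc
    rw [Set.not_nonempty_iff_eq_empty] at hc
    rw [prodC_entry, hc] at h
    simp at h
  obtain ⟨s, hs, hc⟩ := hne.csInf_mem hfin
  exact ⟨s, hs, by rw [hc, prodC_entry]⟩

lemma pre_get {p : Fin n} {s : List (Call n)} (i : ℕ) (hi : i < s.length) :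
    (pre p s).get ⟨i, by simpa using hi⟩ = dst p (s.take i) := by
  induction s generalizing p i with
  | nil => simp at hi
  | cons t s ih =>
    cases i with
    | zero => simp
    | succ i =>
      simp only [pre_cons, List.get_cons_succ, List.take_succ_cons, dst_cons]
      exact ih i (by simpa using hi)

lemma ok_take {p : Fin n} {s : List (Call n)} (hok : Ok p s) (i : ℕ) : Ok p (s.take i) := by
  have := (ok_append (p := p) (s₁ := s.take i) (s₂ := s.drop i))
  rw [List.take_append_drop] at this
  exact (this.1 hok).1

/-- vertex visited at step k (k ≤ length): -/
noncomputable def vtx (p : Fin n) (s : List (Call n)) (k : ℕ) : Fin n := dst p (s.take k)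

lemma vtx_last {p q : Fin n} {s : List (Call n)} (hdst : dst p s = q) : vtx p s s.length = q := by
  simp [vtx, List.take_length, hdst]

/-- cut out a loop -/
lemma cut_walk {p q : Fin n} {s : List (Call n)} (hok : Ok p s) (hdst : dst p s = q)
    {i j : ℕ} (hij : i < j) (hj : j ≤ s.length) (heq : vtx p s i = vtx p s j) :
    ∃ s' : List (Call n), s'.Sublist s ∧ Ok p s' ∧ dst p s' = q ∧ wcost s' ≤ wcost s ∧
      s'.length < s.length := by
  refine ⟨s.take i ++ s.drop j, ?_, ?_, ?_, ?_, ?_⟩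
  · have h1 : s.take i = (s.take j).take i := by rw [List.take_take, min_eq_left hij.le]
    have h2 : s.take i |>.Sublist (s.take j) := by rw [h1]; exact List.take_sublist _ _
    calc (s.take i ++ s.drop j).Sublist ((s.take j) ++ s.drop j) := h2.append_right _
      _ = s := by rw [List.take_append_drop]
  · rw [ok_append]
    constructor
    · exact ok_take hok i
    · show Ok (dst p (s.take i)) (s.drop j)
      have : dst p (s.take i) = dst p (s.take j) := heq
      rw [this]
      have := (ok_append (p := p) (s₁ := s.take j) (s₂ := s.drop j))
      rw [List.take_append_drop] at this
      exact (this.1 hok).2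
  · rw [dst_append]
    show dst (dst p (s.take i)) (s.drop j) = q
    have : dst p (s.take i) = dst p (s.take j) := heq
    rw [this]
    have : dst (dst p (s.take j)) (s.drop j) = dst p s := by
      rw [← dst_append, List.take_append_drop]
    rw [this, hdst]
  · have h1 : s.take i = (s.take j).take i := by rw [List.take_take, min_eq_left hij.le]
    have h2 : s.take i |>.Sublist (s.take j) := by rw [h1]; exact List.take_sublist _ _
    have : (s.take i ++ s.drop j).Sublist s := by
      calc (s.take i ++ s.drop j).Sublist ((s.take j) ++ s.drop j) := h2.append_right _
        _ = s := by rw [List.take_append_drop]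
    exact wcost_le_of_sublist this
  · rw [List.length_append, List.length_take, List.length_drop]
    omega

/-- walk with a repeated vertex can be strictly shortened -/
lemma shorten {p q : Fin n} {s : List (Call n)} (hok : Ok p s) (hdst : dst p s = q)
    (hnd : ¬ (pre p s ++ [q]).Nodup) :
    ∃ s' : List (Call n), s'.Sublist s ∧ Ok p s' ∧ dst p s' = q ∧ wcost s' ≤ wcost s ∧
      s'.length < s.length := by
  -- find repeated vertex positions
  have hlen : (pre p s ++ [q]).length = s.length + 1 := by simp
  have hget : ∀ k (hk : k < s.length + 1), (pre p s ++ [q]).get ⟨k, by omega⟩ = vtx p s k := by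
    intro k hk
    by_cases hks : k < s.length
    · rw [List.get_eq_getElem, List.getElem_append_left (by simpa using hks)]
      exact pre_get k hks
    · have hk' : k = s.length := by omega
      subst hk'
      have : (pre p s ++ [q]).get ⟨s.length, by omega⟩ = q := by
        simp [List.getElem_append_right]
      rw [this, vtx_last hdst]
  rw [List.nodup_iff_injective_get] at hnd
  simp only [Function.Injective, not_forall] at hnd
  obtain ⟨a, b, hab, hne⟩ := hnd
  have hvab : vtx p s a.val = vtx p s b.val := by
    have ha := hget a.val (by have := a.isLt; omega)
    have hb := hget b.val (by have := b.isLt; omega)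
    rw [← ha, ← hb, hab]
  have hne' : a.val ≠ b.val := fun h => hne (Fin.ext h)
  rcases Nat.lt_or_ge a.val b.val with h | h
  · exact cut_walk hok hdst h (by have := b.isLt; simp at this; omega) hvab
  · have h2 : b.val < a.val := by omega
    exact cut_walk hok hdst h2 (by have := a.isLt; simp at this; omega) hvab.symm

lemma exists_nodup_walk : ∀ (m : ℕ) {p q : Fin n} (s : List (Call n)), s.length ≤ m →
    Ok p s → dst p s = q →
    ∃ s' : List (Call n), s'.Sublist s ∧ Ok p s' ∧ dst p s' = q ∧ wcost s' ≤ wcost s ∧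
      (pre p s' ++ [q]).Nodup := by
  intro m
  induction m with
  | zero =>
    intro p q s hs hok hdst
    have : s = [] := List.length_eq_zero_iff.1 (by omega)
    subst this
    exact ⟨[], List.Sublist.refl _, trivial, hdst, le_refl _, by simp⟩
  | succ m ih =>
    intro p q s hs hok hdst
    by_cases hnd : (pre p s ++ [q]).Nodup
    · exact ⟨s, List.Sublist.refl _, hok, hdst, le_refl _, hnd⟩
    · obtain ⟨s', hsub, hok', hdst', hc, hlt⟩ := shorten hok hdst hnd
      obtain ⟨s'', h1, h2, h3, h4, h5⟩ := ih s' (by omega) hok' hdst'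
      exact ⟨s'', h1.trans hsub, h2, h3, le_trans h4 hc, h5⟩

/-- canonical optimal simple walk -/
lemma exists_opt_nodup {l : List (Call n)} {p q : Fin n} (h : prodC l p q ≠ ⊤) :
    ∃ s ∈ WSet l p q, wcost s = prodC l p q ∧ (pre p s ++ [q]).Nodup := by
  obtain ⟨s, hs, hc⟩ := exists_opt h
  obtain ⟨s', h1, h2, h3, h4, h5⟩ :=
    exists_nodup_walk s.length s (le_refl _) hs.2.1 hs.2.2
  refine ⟨s', ⟨h1.trans hs.1, h2, h3⟩, le_antisymm (by rw [← hc]; exact h4) ?_, h5⟩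
  rw [prodC_entry]
  exact sInf_le ⟨s', ⟨h1.trans hs.1, h2, h3⟩, rfl⟩

end Gossip
namespace Gossip
variable {n : ℕ}

lemma nxt_eq_of_ne {x xt : Fin n} {t : Call n} (hx : x = t.1 ∨ x = t.2.1)
    (hxt : xt = t.1 ∨ xt = t.2.1) (hne : xt ≠ x) : nxt xt t = x := by
  by_cases h : xt = t.1
  · have hx2 : x = t.2.1 := by
      rcases hx with h2 | h2
      · exact absurd (h2.trans h.symm).symm hne
      · exact h2
    unfold nxt
    rw [if_pos h]
    exact hx2.symm
  · have hxt2 : xt = t.2.1 := hxt.resolve_left h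
    have hx1 : x = t.1 := by
      rcases hx with h2 | h2
      · exact h2
      · exact absurd (h2.trans hxt2.symm).symm hne
    unfold nxt
    rw [if_neg h]
    exact hx1.symm

lemma sublist_split_dichotomy {w A B : List (Call n)} {t : Call n}
    (h : w.Sublist (A ++ t :: B)) :
    w.Sublist (A ++ B) ∨ ∃ w₁ w₂, w = w₁ ++ t :: w₂ ∧ w₁.Sublist A ∧ w₂.Sublist B := by
  rw [List.sublist_append_iff] at h
  obtain ⟨s₁, s₂, rfl, h₁, h₂⟩ := h
  cases h₂ with
  | cons _ h₂ => exact Or.inl (List.Sublist.append h₁ h₂)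
  | cons_cons _ h₂ =>
    rename_i s₂'
    exact Or.inr ⟨s₁, s₂', rfl, h₁, h₂⟩

/-- The core exchange argument: two "forced" calls cannot swap their
{departure, target} pairs. Here `t` is the earlier call (the list is
`A ++ t :: mid ++ t' :: B'`), `w₁ ++ t :: w₂` is an optimal `p→u` walk crossing `t`
departing from `x`, and `w₁' ++ t' :: w₂'` is an optimal `p→x` walk crossing `t'`
departing from `u`. -/
lemma cross_contradiction {A mid B' w₁ w₂ w₁' w₂' : List (Call n)} {t t' : Call n}
    {p u x : Fin n} {Mpu Mpx : ℝ≥0∞}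
    (hf : ∀ w : List (Call n), w.Sublist (A ++ (mid ++ t' :: B')) → Ok p w → dst p w = u →
      Mpu < wcost w)
    (hf' : ∀ w : List (Call n), w.Sublist ((A ++ t :: mid) ++ B') → Ok p w → dst p w = x →
      Mpx < wcost w)
    (hok : Ok p (w₁ ++ t :: w₂)) (hcw : wcost (w₁ ++ t :: w₂) = Mpu)
    (hw₁ : w₁.Sublist A) (hx : dst p w₁ = x)
    (hok' : Ok p (w₁' ++ t' :: w₂')) (hcw' : wcost (w₁' ++ t' :: w₂') = Mpx)
    (hw₁' : w₁'.Sublist (A ++ t :: mid)) (hu : dst p w₁' = u) : False := by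
  have hA : A.Sublist ((A ++ t :: mid) ++ B') :=
    ((List.sublist_append_left A (t :: mid)).trans (List.sublist_append_left _ B'))
  have hxor : x = t.1 ∨ x = t.2.1 := by
    have h2 := (ok_append.1 hok).2
    rw [hx] at h2
    exact h2.1
  have hokw₁ : Ok p w₁ := (ok_append.1 hok).1
  have hokw₁' : Ok p w₁' := (ok_append.1 hok').1
  -- step 1 : w₁ is a p→x walk avoiding the later split
  have step1 : Mpx < wcost w₁ := hf' w₁ (hw₁.trans hA) hokw₁ hx
  have hcw'ge : wcost w₁' ≤ Mpx := by
    rw [← hcw']; exact wcost_le_of_sublist (List.sublist_append_left _ _)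
  have hcwge : wcost w₁ ≤ Mpu := by
    rw [← hcw]; exact wcost_le_of_sublist (List.sublist_append_left _ _)
  -- step 2 : dichotomy for w₁' w.r.t. the earlier split
  rcases sublist_split_dichotomy hw₁' with hcase | ⟨b₁, b₂, rfl, hb₁, hb₂⟩
  · -- w₁' avoids t : a p→u walk avoiding the earlier split
    have h1 : Mpu < wcost w₁' :=
      hf w₁' (hcase.trans (List.Sublist.append_left (List.sublist_append_left mid (t' :: B')) A))
        hokw₁' hu
    -- Mpu < wcost w₁' ≤ Mpx < wcost w₁ ≤ Mpu
    exact lt_irrefl Mpu (lt_of_lt_of_le (lt_of_le_of_lt (le_trans h1.le hcw'ge) step1) hcwge)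
  · -- w₁' = b₁ ++ t :: b₂ crosses t
    have hokb := ok_append.1 hokw₁'
    have hb₁cost : wcost b₁ ≤ wcost (b₁ ++ t :: b₂) :=
      wcost_le_of_sublist (List.sublist_append_left _ _)
    by_cases hxx : dst p b₁ = x
    · -- b₁ is a p→x walk avoiding the later split
      have h1 : Mpx < wcost b₁ := hf' b₁ (hb₁.trans hA) hokb.1 hxx
      exact lt_irrefl Mpx (lt_of_lt_of_le h1 (le_trans hb₁cost hcw'ge))
    · -- b₁ ++ [t] is a p→x walk avoiding the later split
      have hnxt : nxt (dst p b₁) t = x := nxt_eq_of_ne hxor hokb.2.1 hxx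
      have hokbt : Ok p (b₁ ++ [t]) := by
        rw [ok_append]
        exact ⟨hokb.1, hokb.2.1, trivial⟩
      have hdstbt : dst p (b₁ ++ [t]) = x := by
        rw [dst_append]
        show dst (nxt (dst p b₁) t) [] = x
        rw [hnxt]; rfl
      have hsubbt : (b₁ ++ [t]).Sublist ((A ++ t :: mid) ++ B') := by
        refine List.Sublist.trans ?_ (List.sublist_append_left _ B')
        exact List.Sublist.append hb₁ (List.cons_sublist_cons.2 (List.nil_sublist mid))
      have h1 : Mpx < wcost b₁ + t.2.2 := by
        have h2 := hf' (b₁ ++ [t]) hsubbt hokbt hdstbt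
        rwa [wcost_append, wcost_cons, wcost_nil, add_zero] at h2
      have h2 : wcost b₁ + t.2.2 ≤ wcost (b₁ ++ t :: b₂) := by
        rw [wcost_append, wcost_cons, ← add_assoc]
        exact le_self_add
      exact lt_irrefl Mpx (lt_of_lt_of_le h1 (le_trans h2 hcw'ge))

end Gossip
namespace Gossip
variable {n : ℕ}

/-- Case (a): if an optimal simple walk decomposes through two splits with the same
departure vertex, the two decompositions coincide, so the walk avoids the earlier call. -/
lemma samepair {A mid B' σ₁ σ₂ σ₁' σ₂' : List (Call n)} {t t' : Call n} {p q : Fin n}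
    (hnd : (pre p (σ₁ ++ t :: σ₂) ++ [q]).Nodup)
    (heq : σ₁ ++ t :: σ₂ = σ₁' ++ t' :: σ₂')
    (hs₁ : σ₁.Sublist A) (hs₂' : σ₂'.Sublist B')
    (hdep : dst p σ₁ = dst p σ₁') :
    (σ₁ ++ t :: σ₂).Sublist (A ++ (mid ++ t' :: B')) := by
  have hndpre : (pre p (σ₁ ++ t :: σ₂)).Nodup := hnd.sublist (List.sublist_append_left _ _)
  have hk : σ₁.length < (σ₁ ++ t :: σ₂).length := by
    rw [List.length_append, List.length_cons]; omega
  have hk' : σ₁'.length < (σ₁ ++ t :: σ₂).length := by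
    rw [heq, List.length_append, List.length_cons]; omega
  have h1 : (σ₁ ++ t :: σ₂).take σ₁.length = σ₁ := List.take_left
  have h2 : (σ₁ ++ t :: σ₂).take σ₁'.length = σ₁' := by rw [heq]; exact List.take_left
  have hget : (pre p (σ₁ ++ t :: σ₂)).get ⟨σ₁.length, by simpa using hk⟩
      = (pre p (σ₁ ++ t :: σ₂)).get ⟨σ₁'.length, by simpa using hk'⟩ := by
    rw [pre_get _ hk, pre_get _ hk', h1, h2, hdep]
  have hkk : σ₁.length = σ₁'.length := by
    have h3 := (List.nodup_iff_injective_get.1 hndpre) hget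
    exact congrArg Fin.val h3
  have hσ₁ : σ₁ = σ₁' := by rw [← h1, ← h2, hkk]
  have hts : t :: σ₂ = t' :: σ₂' := by
    apply List.append_cancel_left (as := σ₁)
    rw [heq, hσ₁]
  have ht : t = t' := (List.cons.injEq _ _ _ _ ▸ hts).1
  have hσ₂ : σ₂ = σ₂' := (List.cons.injEq _ _ _ _ ▸ hts).2
  apply List.Sublist.append hs₁
  rw [ht, hσ₂]
  exact List.Sublist.trans (List.cons_sublist_cons.2 hs₂') (List.sublist_append_right _ _)

end Gossip
namespace Gossip
variable {n : ℕ}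

lemma split_at {l : List (Call n)} {j : ℕ} (hj : j < l.length) :
    l = l.take j ++ l.get ⟨j, hj⟩ :: l.drop (j + 1) := by
  conv_lhs => rw [← List.take_append_drop j l]
  congr 1
  rw [List.drop_eq_getElem_cons hj]
  rfl

lemma erase_eq {l : List (Call n)} (j : ℕ) :
    l.eraseIdx j = l.take j ++ l.drop (j + 1) := List.eraseIdx_eq_take_drop_succ l j

lemma two_splits {l : List (Call n)} {i j : ℕ} (hij : i < j) (hj : j < l.length) :
    ∃ mid : List (Call n),
      l.take j = l.take i ++ l.get ⟨i, lt_trans hij hj⟩ :: mid ∧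
      l.drop (i + 1) = mid ++ l.get ⟨j, hj⟩ :: l.drop (j + 1) := by
  refine ⟨(l.drop (i + 1)).take (j - (i + 1)), ?_, ?_⟩
  · have h1 : l.take j = l.take (i + 1) ++ (l.drop (i + 1)).take (j - (i + 1)) := by
      rw [← List.take_add]
      congr 1
      omega
    have h2 : l.take (i + 1) = l.take i ++ [l.get ⟨i, lt_trans hij hj⟩] := by
      rw [List.take_succ]
      congr 1
      rw [List.getElem?_eq_getElem (lt_trans hij hj)]
      rfl
    rw [h1, h2, List.append_assoc]
    rfl
  · conv_lhs => rw [← List.take_append_drop (j - (i + 1)) (l.drop (i + 1))]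
    congr 1
    rw [List.drop_drop]
    have h3 : i + 1 + (j - (i + 1)) = j := by omega
    rw [h3, List.drop_eq_getElem_cons hj]
    rfl

lemma pair_cases {a b c d : Fin n} (hab : a ≠ b)
    (h : ({a, b} : Finset (Fin n)) = {c, d}) : (a = c ∧ b = d) ∨ (a = d ∧ b = c) := by
  have ha : a = c ∨ a = d := by
    have : a ∈ ({c, d} : Finset (Fin n)) := h ▸ (by simp)
    simpa using this
  have hb : b = c ∨ b = d := by
    have : b ∈ ({c, d} : Finset (Fin n)) := h ▸ (by simp)
    simpa using this
  rcases ha with ha | ha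
  · rcases hb with hb | hb
    · exact absurd (ha.trans hb.symm) hab
    · exact Or.inl ⟨ha, hb⟩
  · rcases hb with hb | hb
    · exact Or.inr ⟨ha, hb⟩
    · exact absurd (ha.trans hb.symm) hab


end Gossip
namespace Gossip
variable {n : ℕ}

lemma counting (l : List (Call n))
    (hess : ∀ j : Fin l.length, prodC (l.eraseIdx j.val) ≠ prodC l) :
    l.length ≤ n * n.choose 2 := by
  classical
  -- canonical optimal simple walks
  have hsigex : ∀ p q : Fin n, ∃ s : List (Call n), prodC l p q ≠ ⊤ →
      s ∈ WSet l p q ∧ wcost s = prodC l p q ∧ (pre p s ++ [q]).Nodup := by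
    intro p q
    by_cases h : prodC l p q = ⊤
    · exact ⟨[], fun hc => absurd h hc⟩
    · obtain ⟨s, h1, h2, h3⟩ := exists_opt_nodup h
      exact ⟨s, fun _ => ⟨h1, h2, h3⟩⟩
  choose sig hsig using hsigex
  -- witness pairs
  have hwitex : ∀ j : Fin l.length, ∃ pq : Fin n × Fin n,
      prodC l pq.1 pq.2 < prodC (l.eraseIdx j.val) pq.1 pq.2 := by
    intro j
    have hle : ∀ p q, prodC l p q ≤ prodC (l.eraseIdx j.val) p q :=
      fun p q => prodC_le_of_sublist (List.eraseIdx_sublist l j.val) p q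
    by_contra hc
    push_neg at hc
    apply hess j
    funext p q
    exact le_antisymm (hc (p, q)) (hle p q)
  choose wit hwit using hwitex
  -- σ_j is never a sublist of the deleted list
  have hMne : ∀ j : Fin l.length, prodC l (wit j).1 (wit j).2 ≠ ⊤ :=
    fun j => (hwit j).ne_top
  have hns : ∀ j : Fin l.length,
      ¬ (sig (wit j).1 (wit j).2).Sublist (l.eraseIdx j.val) := by
    intro j hc
    obtain ⟨⟨hsub, hok, hdst⟩, hcost, hnd⟩ := hsig (wit j).1 (wit j).2 (hMne j)
    have h1 : prodC (l.eraseIdx j.val) (wit j).1 (wit j).2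
        ≤ wcost (sig (wit j).1 (wit j).2) := by
      rw [prodC_entry]
      exact sInf_le ⟨_, ⟨hc, hok, hdst⟩, rfl⟩
    rw [hcost] at h1
    exact absurd (lt_of_lt_of_le (hwit j) h1) (lt_irrefl _)
  -- decompose σ_j through the split at j
  have hdecex : ∀ j : Fin l.length, ∃ s₁ s₂ : List (Call n),
      sig (wit j).1 (wit j).2 = s₁ ++ (l.get j) :: s₂ ∧
      s₁.Sublist (l.take j.val) ∧ s₂.Sublist (l.drop (j.val + 1)) := by
    intro j
    obtain ⟨⟨hsub, hok, hdst⟩, hcost, hnd⟩ := hsig (wit j).1 (wit j).2 (hMne j)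
    have hsub' : (sig (wit j).1 (wit j).2).Sublist
        (l.take j.val ++ l.get j :: l.drop (j.val + 1)) := by
      rw [← split_at j.isLt]
      exact hsub
    rcases sublist_split_dichotomy hsub' with hcase | ⟨s₁, s₂, heq, h₁, h₂⟩
    · exfalso
      apply hns j
      rw [erase_eq]
      exact hcase
    · exact ⟨s₁, s₂, heq, h₁, h₂⟩
  choose d₁ d₂ hdec using hdecex
  -- departure vertex and token
  set x : Fin l.length → Fin n := fun j => dst (wit j).1 (d₁ j) with hxdef
  have hxq : ∀ j : Fin l.length, x j ≠ (wit j).2 := by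
    intro j hcon
    obtain ⟨⟨hsub, hok, hdst⟩, hcost, hnd⟩ := hsig (wit j).1 (wit j).2 (hMne j)
    obtain ⟨heq, h₁, h₂⟩ := hdec j
    have hdisj : (pre (wit j).1 (sig (wit j).1 (wit j).2)).Disjoint [(wit j).2] :=
      List.disjoint_of_nodup_append hnd
    have hmem : x j ∈ pre (wit j).1 (sig (wit j).1 (wit j).2) := by
      rw [heq, pre_append, pre_cons]
      exact List.mem_append_right _ (List.mem_cons_self)
    exact hdisj hmem (by rw [hcon]; exact List.mem_singleton.2 rfl)
  -- the "forced" inequality in usable form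
  have hforced : ∀ (j : Fin l.length) (w : List (Call n)),
      w.Sublist (l.eraseIdx j.val) → Ok (wit j).1 w → dst (wit j).1 w = (wit j).2 →
      prodC l (wit j).1 (wit j).2 < wcost w := by
    intro j w hsub hok hdst
    refine lt_of_lt_of_le (hwit j) ?_
    rw [prodC_entry]
    exact sInf_le ⟨w, ⟨hsub, hok, hdst⟩, rfl⟩
  -- key case (a): same witness pair, same departure, different indices: impossible
  have keyA : ∀ a b : Fin l.length, a.val < b.val → wit a = wit b → x a = x b → False := by
    intro a b hab hw hxx
    obtain ⟨mid, hm1, hm2⟩ := two_splits hab b.isLt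
    obtain ⟨⟨hsuba, hoka, hdsta⟩, hcosta, hnda⟩ := hsig (wit a).1 (wit a).2 (hMne a)
    obtain ⟨heqa, ha₁, ha₂⟩ := hdec a
    obtain ⟨heqb, hb₁, hb₂⟩ := hdec b
    -- same sigma
    have hss : sig (wit a).1 (wit a).2 = sig (wit b).1 (wit b).2 := by rw [hw]
    have heq2 : d₁ a ++ l.get a :: d₂ a = d₁ b ++ l.get b :: d₂ b := by
      rw [← heqa, hss, heqb]
    have hdep : dst (wit a).1 (d₁ a) = dst (wit a).1 (d₁ b) := by
      have : dst (wit b).1 (d₁ b) = dst (wit a).1 (d₁ b) := by rw [hw]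
      rw [← this]
      exact hxx
    have hget : l.get ⟨a.val, lt_trans hab b.isLt⟩ = l.get a := by
      congr 1
    have hnd' : (pre (wit a).1 (d₁ a ++ l.get a :: d₂ a) ++ [(wit a).2]).Nodup := by
      rw [← heqa]; exact hnda
    have hsp := samepair (A := l.take a.val) (mid := mid) (B' := l.drop (b.val + 1))
      (t := l.get a) (t' := l.get b) (p := (wit a).1) (q := (wit a).2)
      hnd' heq2 ha₁ hb₂ hdep
    apply hns a
    rw [erase_eq, heqa, hm2]
    exact hsp
  -- key case (b): swapped tokens: impossible
  have keyB : ∀ a b : Fin l.length, a.val < b.val → (wit a).1 = (wit b).1 →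
      (wit a).2 = x b → (wit b).2 = x a → False := by
    intro a b hab hp hqa hqb
    obtain ⟨mid, hm1, hm2⟩ := two_splits hab b.isLt
    obtain ⟨⟨hsuba, hoka, hdsta⟩, hcosta, hnda⟩ := hsig (wit a).1 (wit a).2 (hMne a)
    obtain ⟨⟨hsubb, hokb, hdstb⟩, hcostb, hndb⟩ := hsig (wit b).1 (wit b).2 (hMne b)
    obtain ⟨heqa, ha₁, ha₂⟩ := hdec a
    obtain ⟨heqb, hb₁, hb₂⟩ := hdec b
    have hoka' : Ok (wit a).1 (d₁ a ++ l.get a :: d₂ a) := by rw [← heqa]; exact hoka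
    have hokb' : Ok (wit a).1 (d₁ b ++ l.get b :: d₂ b) := by
      rw [← heqb, ← hp]
      rw [hp]; exact hokb
    have hcosta' : wcost (d₁ a ++ l.get a :: d₂ a) = prodC l (wit a).1 (wit a).2 := by
      rw [← heqa]; exact hcosta
    have hcostb' : wcost (d₁ b ++ l.get b :: d₂ b) = prodC l (wit a).1 (x a) := by
      rw [← heqb, hcostb, ← hp, ← hqb]
    apply cross_contradiction (A := l.take a.val) (mid := mid) (B' := l.drop (b.val + 1))
      (t := l.get a) (t' := l.get b) (p := (wit a).1) (u := (wit a).2) (x := x a)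
      (Mpu := prodC l (wit a).1 (wit a).2) (Mpx := prodC l (wit a).1 (x a))
      ?_ ?_ hoka' hcosta' ha₁ rfl hokb' hcostb' ?_ ?_
    · -- hf : walks avoiding split a to target (wit a).2
      intro w hsub hok hdst
      apply hforced a w _ hok hdst
      rw [erase_eq, hm2]
      exact hsub
    · -- hf' : walks avoiding split b to target x a
      intro w hsub hok hdst
      have h2 := hforced b w ?_ (by rw [← hp]; exact hok) (by rw [hqb, ← hp]; exact hdst)
      · rw [hqb, ← hp] at h2
        exact h2
      · rw [erase_eq, hm1]
        exact hsub
    · -- d₁ b <+ take a ++ l.get a :: mid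
      rw [← hm1]
      exact hb₁
    · -- dst p (d₁ b) = (wit a).2
      rw [hqa, hxdef, hp]
  -- tokens
  have htok : ∀ j : Fin l.length, ({x j, (wit j).2} : Finset (Fin n)) ∈
      (Finset.univ : Finset (Fin n)).powersetCard 2 := by
    intro j
    rw [Finset.mem_powersetCard]
    exact ⟨Finset.subset_univ _, Finset.card_pair (hxq j)⟩
  -- counting
  have hfib : ∀ p : Fin n,
      (Finset.univ.filter (fun j : Fin l.length => (wit j).1 = p)).card ≤ n.choose 2 := by
    intro p
    have hinj : Set.InjOn (fun j : Fin l.length => ({x j, (wit j).2} : Finset (Fin n)))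
        (Finset.univ.filter (fun j : Fin l.length => (wit j).1 = p)) := by
      intro a ha b hb htokeq
      simp only [Finset.coe_filter, Set.mem_setOf_eq, Finset.mem_univ, true_and] at ha hb
      by_contra hne
      have hp : (wit a).1 = (wit b).1 := by rw [ha, hb]
      rcases pair_cases (hxq a) htokeq with ⟨h1, h2⟩ | ⟨h1, h2⟩
      · -- same pair and departure
        have hw : wit a = wit b := Prod.ext hp h2
        have hvne : a.val ≠ b.val := fun h => hne (Fin.ext h)
        rcases Nat.lt_or_ge a.val b.val with h | h
        · exact keyA a b h hw h1
        · exact keyA b a (by omega) hw.symm h1.symm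
      · -- swapped
        have hvne : a.val ≠ b.val := fun h => hne (Fin.ext h)
        rcases Nat.lt_or_ge a.val b.val with h | h
        · exact keyB a b h hp h2 h1.symm
        · exact keyB b a (by omega) hp.symm h1.symm h2
    calc (Finset.univ.filter (fun j : Fin l.length => (wit j).1 = p)).card
        ≤ ((Finset.univ : Finset (Fin n)).powersetCard 2).card :=
          Finset.card_le_card_of_injOn _ (fun j _ => htok j) hinj
      _ = n.choose 2 := by
          rw [Finset.card_powersetCard]
          simp
  calc l.length = (Finset.univ : Finset (Fin l.length)).card := by simp
    _ = ∑ p : Fin n, (Finset.univ.filter (fun j : Fin l.length => (wit j).1 = p)).card :=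
        Finset.card_eq_sum_card_fiberwise (fun j _ => Finset.mem_univ _)
    _ ≤ ∑ _p : Fin n, n.choose 2 := Finset.sum_le_sum (fun p _ => hfib p)
    _ = n * n.choose 2 := by simp [Finset.sum_const, mul_comm]

end Gossip
namespace Gossip
variable {n : ℕ}

lemma two_choose (n : ℕ) : 2 * (n * n.choose 2) = n ^ 2 * (n - 1) := by
  rw [Nat.choose_two_right]
  have h2 : 2 ∣ n * (n - 1) := by
    rcases Nat.even_or_odd n with h | h
    · exact Dvd.dvd.mul_right h.two_dvd _
    · have he : Even (n - 1) := Nat.Odd.sub_odd h odd_one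
      exact Dvd.dvd.mul_left he.two_dvd _
  calc 2 * (n * (n * (n - 1) / 2)) = n * (2 * (n * (n - 1) / 2)) := by ring
    _ = n * (n * (n - 1)) := by rw [Nat.mul_div_cancel' h2]
    _ = n ^ 2 * (n - 1) := by ring

lemma main_aux : ∀ (m : ℕ) (l : List (Call n)), l.length ≤ m → (∀ t ∈ l, t.1 ≠ t.2.1) →
    ∃ l' : List (Call n), (∀ t ∈ l', t.1 ≠ t.2.1) ∧ prodC l' = prodC l ∧
      2 * l'.length ≤ n ^ 2 * (n - 1) := by
  intro m
  induction m with
  | zero =>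
    intro l hlen _hd
    have : l = [] := List.length_eq_zero_iff.1 (by omega)
    subst this
    exact ⟨[], by simp, rfl, by simp⟩
  | succ m ih =>
    intro l hlen hd
    by_cases h : ∃ j : Fin l.length, prodC (l.eraseIdx j.val) = prodC l
    · obtain ⟨j, hj⟩ := h
      have hpos : 0 < l.length := j.pos
      have hlen₂ : (l.eraseIdx j.val).length ≤ m := by
        have := List.length_eraseIdx_of_lt j.isLt
        omega
      have hd₂ : ∀ t ∈ l.eraseIdx j.val, t.1 ≠ t.2.1 :=
        fun t ht => hd t ((List.eraseIdx_sublist l j.val).subset ht)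
      obtain ⟨l', h1, h2, h3⟩ := ih (l.eraseIdx j.val) hlen₂ hd₂
      exact ⟨l', h1, h2.trans hj, h3⟩
    · push_neg at h
      have hcnt := counting l h
      refine ⟨l, hd, rfl, ?_⟩
      calc 2 * l.length ≤ 2 * (n * n.choose 2) := by omega
        _ = n ^ 2 * (n - 1) := two_choose n

end Gossip

theorem length_bound {n : ℕ}
    (l : List (Fin n × Fin n × ℝ≥0∞)) (hd : ∀ t ∈ l, t.1 ≠ t.2.1) :
    ∃ l' : List (Fin n × Fin n × ℝ≥0∞),
      (∀ t ∈ l', t.1 ≠ t.2.1) ∧ prodC l' = prodC l ∧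
      2 * l'.length ≤ n ^ 2 * (n - 1) := by
  exact Gossip.main_aux l.length l le_rfl hd
end

section
/- The set {A_1 ⊙ ⋯ ⊙ A_k : k ∈ ℕ, A_i metric matrices} of all tropical products of n×n metric matrices is the support of a finite polyhedral fan in ℝ_{≥0}^{n×n}: it is a finite union of images of orthants ℝ_{≥0}^m under piecewise-linear maps given by tropical products of lossy phone call matrices. -/
open scoped ENNReal

open scoped NNReal

/-- A metric matrix: finite entries, zero diagonal, symmetric, triangle inequalities. -/
def IsMetric {n : ℕ} (A : Matrix (Fin n) (Fin n) ℝ≥0∞) : Prop :=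
  (∀ i j, A i j ≠ ⊤) ∧ (∀ i, A i i = 0) ∧ (∀ i j, A i j = A j i) ∧
    ∀ i j k, A i k ≤ A i j + A j k

/-- The piecewise-linear map attached to a list of pairs `I`, sending a point of the
orthant ℝ_{≥0}^{|I|} to the corresponding tropical product of lossy phone call matrices. -/
noncomputable def callProdMap {n : ℕ} (I : List (Fin n × Fin n)) :
    (Fin I.length → ℝ≥0) → Matrix (Fin n) (Fin n) ℝ≥0∞ :=
  fun a => (List.ofFn fun r : Fin I.length =>
    call (I.get r).1 (I.get r).2 (a r : ℝ≥0∞)).foldr tropMul tropId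

namespace TropFan

variable {n : ℕ}

lemma tropMul_le (A B : Matrix (Fin n) (Fin n) ℝ≥0∞) (i j k : Fin n) :
    tropMul A B i j ≤ A i k + B k j :=
  Finset.inf_le (Finset.mem_univ k)

lemma le_tropMul {A B : Matrix (Fin n) (Fin n) ℝ≥0∞} {i j : Fin n} {x : ℝ≥0∞}
    (h : ∀ k, x ≤ A i k + B k j) : x ≤ tropMul A B i j :=
  Finset.le_inf fun k _ => h k

lemma tropMul_mono {A A' B B' : Matrix (Fin n) (Fin n) ℝ≥0∞}
    (hA : ∀ i j, A i j ≤ A' i j) (hB : ∀ i j, B i j ≤ B' i j) :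
    ∀ i j, tropMul A B i j ≤ tropMul A' B' i j := fun i j =>
  le_tropMul fun k => (tropMul_le A B i j k).trans (add_le_add (hA i k) (hB k j))

lemma tropMul_tropId (A : Matrix (Fin n) (Fin n) ℝ≥0∞) : tropMul A tropId = A := by
  funext i j
  apply le_antisymm
  · simpa [tropId] using tropMul_le A tropId i j j
  · refine le_tropMul fun k => ?_
    by_cases hk : k = j
    · subst hk; simp [tropId]
    · simp [tropId, hk]

lemma tropId_tropMul (A : Matrix (Fin n) (Fin n) ℝ≥0∞) : tropMul tropId A = A := by
  funext i j
  apply le_antisymm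
  · simpa [tropId] using tropMul_le tropId A i j i
  · refine le_tropMul fun k => ?_
    by_cases hk : i = k
    · subst hk; simp [tropId]
    · simp [tropId, hk]

lemma tropMul_entry (A B : Matrix (Fin n) (Fin n) ℝ≥0∞) (i j : Fin n) :
    tropMul A B i j = ⨅ k, A i k + B k j := by
  simp [tropMul, Finset.inf_eq_iInf]

lemma tropMul_assoc (A B C : Matrix (Fin n) (Fin n) ℝ≥0∞) :
    tropMul (tropMul A B) C = tropMul A (tropMul B C) := by
  funext i j
  simp only [tropMul_entry, ENNReal.iInf_add, ENNReal.add_iInf]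
  rw [iInf_comm]
  exact iInf_congr fun k => iInf_congr fun m => (add_assoc _ _ _)

@[simp] lemma prodC_nil : (prodC [] : Matrix (Fin n) (Fin n) ℝ≥0∞) = tropId := rfl

lemma prodC_cons (t : Fin n × Fin n × ℝ≥0∞) (w : List (Fin n × Fin n × ℝ≥0∞)) :
    prodC (t :: w) = tropMul (call t.1 t.2.1 t.2.2) (prodC w) := rfl

lemma prodC_append (u v : List (Fin n × Fin n × ℝ≥0∞)) :
    prodC (u ++ v) = tropMul (prodC u) (prodC v) := by
  induction u with
  | nil => simp [tropId_tropMul]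
  | cons t u ih => rw [List.cons_append, prodC_cons, prodC_cons, ih, tropMul_assoc]

lemma prodC_diag (w : List (Fin n × Fin n × ℝ≥0∞)) (i : Fin n) : prodC w i i = 0 := by
  induction w with
  | nil => simp [tropId]
  | cons t w ih =>
      refine le_antisymm ?_ zero_le
      have := tropMul_le (call t.1 t.2.1 t.2.2) (prodC w) i i i
      rw [prodC_cons]
      simpa [call, ih] using this

lemma prodC_le_of_mem {w : List (Fin n × Fin n × ℝ≥0∞)} {k l : Fin n} {a : ℝ≥0∞}
    (h : (k, l, a) ∈ w) : prodC w k l ≤ a := by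
  induction w with
  | nil => simp at h
  | cons t w ih =>
      rcases List.mem_cons.mp h with h | h
      · have h1 : call t.1 t.2.1 t.2.2 k l ≤ a := by
          rw [← h]
          by_cases hkl : k = l <;> simp [call, hkl]
        calc prodC (t :: w) k l ≤ call t.1 t.2.1 t.2.2 k l + prodC w l l :=
              tropMul_le _ _ k l l
          _ ≤ a + 0 := by rw [prodC_diag]; exact add_le_add_left h1 0
          _ = a := add_zero a
      · calc prodC (t :: w) k l ≤ call t.1 t.2.1 t.2.2 k k + prodC w k l :=
              tropMul_le _ _ k l k
          _ = prodC w k l := by simp [call]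
          _ ≤ a := ih h

lemma call_tropMul_le (k l : Fin n) (a : ℝ≥0∞) (P : Matrix (Fin n) (Fin n) ℝ≥0∞) :
    ∀ i j, tropMul (call k l a) P i j ≤ P i j := fun i j => by
  simpa [call] using tropMul_le (call k l a) P i j i

lemma prodC_anti {u w : List (Fin n × Fin n × ℝ≥0∞)} (h : u.Sublist w) :
    ∀ i j, prodC w i j ≤ prodC u i j := by
  induction h with
  | slnil => exact fun i j => le_rfl
  | cons t h ih =>
      intro i j
      exact le_trans (by rw [prodC_cons]; exact call_tropMul_le _ _ _ _ i j) (ih i j)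
  | cons_cons t h ih =>
      intro i j
      rw [prodC_cons, prodC_cons]
      exact tropMul_mono (fun _ _ => le_rfl) ih i j


/-- `Chains w p i j` : the word `w` is exactly the list of calls of a walk from `i` to `j`,
with `p` the successive vertices after each step. -/
inductive Chains : List (Fin n × Fin n × ℝ≥0∞) → List (Fin n) → Fin n → Fin n → Prop
  | nil (i : Fin n) : Chains [] [] i i
  | consL {w p} {j : Fin n} (k l : Fin n) (a : ℝ≥0∞) :
      Chains w p l j → Chains ((k, l, a) :: w) (l :: p) k j
  | consR {w p} {j : Fin n} (k l : Fin n) (a : ℝ≥0∞) :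
      Chains w p k j → Chains ((k, l, a) :: w) (k :: p) l j

/-- total cost of a word -/
noncomputable def wval (w : List (Fin n × Fin n × ℝ≥0∞)) : ℝ≥0∞ := (w.map fun t => t.2.2).sum

@[simp] lemma wval_nil : wval ([] : List (Fin n × Fin n × ℝ≥0∞)) = 0 := rfl

@[simp] lemma wval_cons (t : Fin n × Fin n × ℝ≥0∞) (w) :
    wval (t :: w) = t.2.2 + wval w := by simp [wval]

lemma chains_length {w : List (Fin n × Fin n × ℝ≥0∞)} {p : List (Fin n)} {i j : Fin n}
    (h : Chains w p i j) : w.length = p.length := by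
  induction h with
  | nil => rfl
  | consL k l a h ih => simpa using ih
  | consR k l a h ih => simpa using ih

lemma prodC_le_wval {w : List (Fin n × Fin n × ℝ≥0∞)} {p : List (Fin n)} {i j : Fin n}
    (h : Chains w p i j) : prodC w i j ≤ wval w := by
  induction h with
  | nil => simp [tropId]
  | @consL w p j k l a h ih =>
      have h1 : call k l a k l ≤ a := by
        by_cases hkl : k = l <;> simp [call, hkl]
      calc prodC ((k, l, a) :: w) k j ≤ call k l a k l + prodC w l j := tropMul_le _ _ _ _ _
        _ ≤ a + wval w := add_le_add h1 ih
        _ = wval ((k, l, a) :: w) := by simp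
  | @consR w p j k l a h ih =>
      have h1 : call k l a l k ≤ a := by
        by_cases hkl : l = k <;> simp [call, hkl]
      calc prodC ((k, l, a) :: w) l j ≤ call k l a l k + prodC w k j := tropMul_le _ _ _ _ _
        _ ≤ a + wval w := add_le_add h1 ih
        _ = wval ((k, l, a) :: w) := by simp

lemma exists_chain (w : List (Fin n × Fin n × ℝ≥0∞)) : ∀ i j : Fin n, prodC w i j ≠ ⊤ →
    ∃ u p, u.Sublist w ∧ Chains u p i j ∧ wval u ≤ prodC w i j := by
  induction w with
  | nil =>
      intro i j h
      by_cases hij : i = j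
      · subst hij
        exact ⟨[], [], List.Sublist.refl _, Chains.nil i, by simp [tropId]⟩
      · exact absurd (by simp [tropId, hij] : prodC [] i j = ⊤) h
  | cons t w ih =>
      intro i j h
      haveI : Nonempty (Fin n) := ⟨i⟩
      obtain ⟨k₀, -, hk₀⟩ := Finset.exists_mem_eq_inf Finset.univ Finset.univ_nonempty
        (fun k => call t.1 t.2.1 t.2.2 i k + prodC w k j)
      have hval : prodC (t :: w) i j = call t.1 t.2.1 t.2.2 i k₀ + prodC w k₀ j := hk₀
      rw [hval] at h
      obtain ⟨hc, hp⟩ := ENNReal.add_ne_top.mp h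
      by_cases h2 : i = k₀
      · subst h2
        have hcall : call t.1 t.2.1 t.2.2 i i = 0 := by simp [call]
        obtain ⟨u, p, hsub, hch, hv⟩ := ih i j hp
        exact ⟨u, p, hsub.cons t, hch, by rw [hval, hcall, zero_add]; exact hv⟩
      · by_cases h3 : (i = t.1 ∧ k₀ = t.2.1) ∨ (i = t.2.1 ∧ k₀ = t.1)
        · have hcall : call t.1 t.2.1 t.2.2 i k₀ = t.2.2 := by simp [call, h2, h3]
          obtain ⟨u, p, hsub, hch, hv⟩ := ih k₀ j hp
          rcases h3 with ⟨hi, hk⟩ | ⟨hi, hk⟩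
          · refine ⟨(t.1, t.2.1, t.2.2) :: u, k₀ :: p, ?_, ?_, ?_⟩
            · simpa using hsub.cons₂ t
            · subst hi hk; exact Chains.consL _ _ _ hch
            · rw [hval, hcall]
              simpa using add_le_add_right hv t.2.2
          · refine ⟨(t.1, t.2.1, t.2.2) :: u, k₀ :: p, ?_, ?_, ?_⟩
            · simpa using hsub.cons₂ t
            · subst hi hk; exact Chains.consR _ _ _ hch
            · rw [hval, hcall]
              simpa using add_le_add_right hv t.2.2
        · exact absurd (by simp [call, h2, h3] : call t.1 t.2.1 t.2.2 i k₀ = ⊤) hc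

lemma chain_split {u : List (Fin n × Fin n × ℝ≥0∞)} {q : List (Fin n)} {v j : Fin n}
    (h : Chains u q v j) :
    ∀ i ∈ (v :: q), ∃ u2 q2, u2.Sublist u ∧ Chains u2 q2 i j ∧ wval u2 ≤ wval u ∧
      (i :: q2).Sublist (v :: q) := by
  induction h with
  | nil v =>
      intro i hi
      have : i = v := by simpa using hi
      subst this
      exact ⟨[], [], List.Sublist.refl _, Chains.nil i, le_rfl, List.Sublist.refl _⟩
  | @consL w p j k l a h ih =>
      intro i hi
      by_cases hik : i = k
      · subst hik
        exact ⟨(i, l, a) :: w, l :: p, List.Sublist.refl _, Chains.consL _ _ _ h, le_rfl,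
          List.Sublist.refl _⟩
      · have hi' : i ∈ l :: p := by
          rcases List.mem_cons.mp hi with h' | h'
          · exact absurd h' hik
          · exact h'
        obtain ⟨u2, q2, hs, hc, hv, hq⟩ := ih i hi'
        exact ⟨u2, q2, hs.cons _, hc, hv.trans le_add_self, hq.cons _⟩
  | @consR w p j k l a h ih =>
      intro i hi
      by_cases hik : i = l
      · subst hik
        exact ⟨(k, i, a) :: w, k :: p, List.Sublist.refl _, Chains.consR _ _ _ h, le_rfl,
          List.Sublist.refl _⟩
      · have hi' : i ∈ k :: p := by
          rcases List.mem_cons.mp hi with h' | h'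
          · exact absurd h' hik
          · exact h'
        obtain ⟨u2, q2, hs, hc, hv, hq⟩ := ih i hi'
        exact ⟨u2, q2, hs.cons _, hc, hv.trans le_add_self, hq.cons _⟩

lemma chain_nodup {w : List (Fin n × Fin n × ℝ≥0∞)} {p : List (Fin n)} {i j : Fin n}
    (h : Chains w p i j) :
    ∃ u q, u.Sublist w ∧ Chains u q i j ∧ wval u ≤ wval w ∧ (i :: q).Nodup := by
  induction h with
  | nil i => exact ⟨[], [], List.Sublist.refl _, Chains.nil i, le_rfl, by simp⟩
  | @consL w p j k l a h ih =>
      obtain ⟨u, q, hs, hc, hv, hnd⟩ := ih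
      by_cases hk : k ∈ (l :: q)
      · obtain ⟨u2, q2, hs2, hc2, hv2, hq2⟩ := chain_split hc k hk
        exact ⟨u2, q2, (hs2.trans hs).cons _, hc2,
          (hv2.trans hv).trans (by simpa using (le_add_self : wval w ≤ a + wval w)),
          hq2.nodup hnd⟩
      · refine ⟨(k, l, a) :: u, l :: q, hs.cons₂ _, Chains.consL _ _ _ hc, ?_, ?_⟩
        · simpa using add_le_add_right hv a
        · exact List.nodup_cons.mpr ⟨hk, hnd⟩
  | @consR w p j k l a h ih =>
      obtain ⟨u, q, hs, hc, hv, hnd⟩ := ih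
      by_cases hk : l ∈ (k :: q)
      · obtain ⟨u2, q2, hs2, hc2, hv2, hq2⟩ := chain_split hc l hk
        exact ⟨u2, q2, (hs2.trans hs).cons _, hc2,
          (hv2.trans hv).trans (by simpa using (le_add_self : wval w ≤ a + wval w)),
          hq2.nodup hnd⟩
      · refine ⟨(k, l, a) :: u, k :: q, hs.cons₂ _, Chains.consR _ _ _ hc, ?_, ?_⟩
        · simpa using add_le_add_right hv a
        · exact List.nodup_cons.mpr ⟨hk, hnd⟩

lemma exists_short_entry (w : List (Fin n × Fin n × ℝ≥0∞)) (i j : Fin n) :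
    ∃ u, u.Sublist w ∧ u.length ≤ n - 1 ∧ prodC u i j ≤ prodC w i j := by
  by_cases h : prodC w i j = ⊤
  · exact ⟨[], List.nil_sublist w, by simp, by rw [h]; exact le_top⟩
  · obtain ⟨u1, p1, hs1, hc1, hv1⟩ := exists_chain w i j h
    obtain ⟨u, q, hs, hc, hv, hnd⟩ := chain_nodup hc1
    have hcard : (i :: q).length ≤ n := by
      simpa [Fintype.card_fin] using hnd.length_le_card
    have hlen : u.length ≤ n - 1 := by
      have := chains_length hc
      simp at hcard
      omega
    exact ⟨u, hs.trans hs1, hlen, (prodC_le_wval hc).trans (hv.trans hv1)⟩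

lemma sublist_merge {α : Type*} : ∀ (w u v : List α), u.Sublist w → v.Sublist w →
    ∃ z, z.Sublist w ∧ u.Sublist z ∧ v.Sublist z ∧ z.length ≤ u.length + v.length := by
  intro w
  induction w with
  | nil =>
      intro u v hu hv
      rw [List.sublist_nil.mp hu, List.sublist_nil.mp hv]
      exact ⟨[], List.Sublist.refl _, List.Sublist.refl _, List.Sublist.refl _, by simp⟩
  | cons a w ih =>
      intro u v hu hv
      cases hu with
      | cons _ hu' =>
          cases hv with
          | cons _ hv' =>
              obtain ⟨z, h1, h2, h3, h4⟩ := ih u v hu' hv'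
              exact ⟨z, h1.cons a, h2, h3, h4⟩
          | cons_cons _ hv' =>
              obtain ⟨z, h1, h2, h3, h4⟩ := ih u _ hu' hv'
              exact ⟨a :: z, h1.cons₂ a, h2.cons a, h3.cons₂ a, by simpa using by omega⟩
      | cons_cons _ hu' =>
          cases hv with
          | cons _ hv' =>
              obtain ⟨z, h1, h2, h3, h4⟩ := ih _ v hu' hv'
              exact ⟨a :: z, h1.cons₂ a, h2.cons₂ a, h3.cons a, by simp; omega⟩
          | cons_cons _ hv' =>
              obtain ⟨z, h1, h2, h3, h4⟩ := ih _ _ hu' hv'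
              exact ⟨a :: z, h1.cons₂ a, h2.cons₂ a, h3.cons₂ a, by simp; omega⟩

lemma exists_short_multi (w : List (Fin n × Fin n × ℝ≥0∞)) :
    ∀ E : List (Fin n × Fin n),
      ∃ u, u.Sublist w ∧ u.length ≤ (n - 1) * E.length ∧
        ∀ e ∈ E, prodC u e.1 e.2 ≤ prodC w e.1 e.2 := by
  intro E
  induction E with
  | nil => exact ⟨[], List.nil_sublist w, by simp, by simp⟩
  | cons e E ih =>
      obtain ⟨u1, hs1, hl1, hb1⟩ := ih
      obtain ⟨u2, hs2, hl2, hb2⟩ := exists_short_entry w e.1 e.2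
      obtain ⟨z, hz, hu1z, hu2z, hzlen⟩ := sublist_merge w u1 u2 hs1 hs2
      refine ⟨z, hz, ?_, ?_⟩
      · simp only [List.length_cons]
        calc z.length ≤ u1.length + u2.length := hzlen
          _ ≤ (n - 1) * E.length + (n - 1) := add_le_add hl1 hl2
          _ = (n - 1) * (E.length + 1) := by ring
      · intro e' he'
        rcases List.mem_cons.mp he' with he' | he'
        · subst he'
          exact le_trans (prodC_anti hu2z e'.1 e'.2) hb2
        · exact le_trans (prodC_anti hu1z e'.1 e'.2) (hb1 e' he')


/-- the list of all ordered pairs of vertices -/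
def allPairs (n : ℕ) : List (Fin n × Fin n) :=
  (List.finRange n).flatMap fun k => (List.finRange n).map fun l => (k, l)

lemma mem_allPairs (p : Fin n × Fin n) : p ∈ allPairs n := by
  simp only [allPairs, List.mem_flatMap, List.mem_map, List.mem_finRange, true_and]
  exact ⟨p.1, p.2, rfl⟩

lemma exists_short_word (w : List (Fin n × Fin n × ℝ≥0∞)) :
    ∃ u, u.Sublist w ∧ u.length ≤ (n - 1) * (allPairs n).length ∧ prodC u = prodC w := by
  obtain ⟨u, hs, hlen, hle⟩ := exists_short_multi w (allPairs n)
  refine ⟨u, hs, hlen, funext fun i => funext fun j => ?_⟩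
  exact le_antisymm (hle (i, j) (mem_allPairs _)) (prodC_anti hs i j)

/-- the completion of a call matrix to a metric, with default distance `T` -/
noncomputable def padMetric (k l : Fin n) (a T : ℝ≥0∞) : Matrix (Fin n) (Fin n) ℝ≥0∞ :=
  fun i j => if i = j then 0 else if (i = k ∧ j = l) ∨ (i = l ∧ j = k) then a else T

lemma padMetric_le_T {k l : Fin n} {a T : ℝ≥0∞} (haT : a ≤ T) (i j : Fin n) :
    padMetric k l a T i j ≤ T := by
  unfold padMetric
  split
  · exact zero_le
  · split
    · exact haT
    · exact le_rfl

lemma isMetric_padMetric {k l : Fin n} {a T : ℝ≥0∞} (ha : a ≠ ⊤) (hT : T ≠ ⊤) (haT : a ≤ T) :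
    IsMetric (padMetric k l a T) := by
  refine ⟨?_, ?_, ?_, ?_⟩
  · intro i j
    unfold padMetric
    split
    · simp
    · split
      · exact ha
      · exact hT
  · intro i; simp [padMetric]
  · intro i j
    by_cases hij : i = j
    · simp [padMetric, hij]
    · have hji : ¬ j = i := fun h => hij h.symm
      simp only [padMetric, if_neg hij, if_neg hji]
      exact if_congr ⟨fun h => by tauto, fun h => by tauto⟩ rfl rfl
  · intro i j m
    by_cases him : i = m
    · subst him; simp [padMetric]
    · by_cases hij : i = j
      · subst hij; simp [padMetric]
      · by_cases hjm : j = m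
        · subst hjm
          have h0 : padMetric k l a T j j = 0 := by simp [padMetric]
          rw [h0, add_zero]
        · -- i, j, m pairwise distinct
          have h1 : padMetric k l a T i m ≤ T := padMetric_le_T haT i m
          have h2 : T ≤ padMetric k l a T i j + padMetric k l a T j m := by
            by_cases hc1 : (i = k ∧ j = l) ∨ (i = l ∧ j = k)
            · by_cases hc2 : (j = k ∧ m = l) ∨ (j = l ∧ m = k)
              · exfalso
                rcases hc1 with ⟨e1, e2⟩ | ⟨e1, e2⟩ <;> rcases hc2 with ⟨e3, e4⟩ | ⟨e3, e4⟩ <;>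
                  subst_vars <;> simp_all
              · have h3 : padMetric k l a T j m = T := by
                  simp [padMetric, hjm, hc2]
                exact le_trans (le_of_eq h3.symm)
                  (le_add_self : padMetric k l a T j m ≤
                    padMetric k l a T i j + padMetric k l a T j m)
            · have h3 : padMetric k l a T i j = T := by
                simp [padMetric, hij, hc1]
              exact le_trans (le_of_eq h3.symm)
                (le_self_add : padMetric k l a T i j ≤
                  padMetric k l a T i j + padMetric k l a T j m)
          exact h1.trans h2

/-- the product of the padded metrics of a word -/
noncomputable def padProd (w : List (Fin n × Fin n × ℝ≥0∞)) (T : ℝ≥0∞) :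
    Matrix (Fin n) (Fin n) ℝ≥0∞ :=
  (w.map fun t => padMetric t.1 t.2.1 t.2.2 T).foldr tropMul tropId

@[simp] lemma padProd_nil (T : ℝ≥0∞) : (padProd [] T : Matrix (Fin n) (Fin n) ℝ≥0∞) = tropId :=
  rfl

lemma padProd_cons (t : Fin n × Fin n × ℝ≥0∞) (w) (T : ℝ≥0∞) :
    padProd (t :: w) T = tropMul (padMetric t.1 t.2.1 t.2.2 T) (padProd w T) := rfl

lemma padMetric_le_call (k l : Fin n) (a T : ℝ≥0∞) (i j : Fin n) :
    padMetric k l a T i j ≤ call k l a i j := by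
  unfold padMetric call
  split
  · exact le_rfl
  · split
    · exact le_rfl
    · exact le_top

lemma padProd_le (w : List (Fin n × Fin n × ℝ≥0∞)) (T : ℝ≥0∞) (i j : Fin n) :
    padProd w T i j ≤ prodC w i j := by
  induction w generalizing i j with
  | nil => exact le_rfl
  | cons t w ih =>
      rw [padProd_cons, prodC_cons]
      exact tropMul_mono (padMetric_le_call _ _ _ _) (fun i j => ih i j) i j

lemma le_padProd (w : List (Fin n × Fin n × ℝ≥0∞)) (T : ℝ≥0∞)
    (hvT : ∀ t ∈ w, t.2.2 ≤ T) (i j : Fin n) :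
    min (prodC w i j) T ≤ padProd w T i j := by
  induction w generalizing i j with
  | nil => exact min_le_left _ _
  | cons t w ih =>
      rw [padProd_cons]
      refine le_tropMul fun k => ?_
      have hIH : min (prodC w k j) T ≤ padProd w T k j :=
        ih (fun s hs => hvT s (List.mem_cons_of_mem t hs)) k j
      have step : min (prodC (t :: w) i j) T ≤
          padMetric t.1 t.2.1 t.2.2 T i k + min (prodC w k j) T := by
        by_cases hik : i = k
        · have hpad : padMetric t.1 t.2.1 t.2.2 T i k = 0 := by simp [padMetric, hik]
          rw [hpad, zero_add]
          rcases le_total (prodC w k j) T with h | h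
          · rw [min_eq_left h]
            refine (min_le_left _ _).trans ?_
            have h2 := tropMul_le (call t.1 t.2.1 t.2.2) (prodC w) i j k
            rw [prodC_cons]
            simpa [call, hik] using h2
          · rw [min_eq_right h]; exact min_le_right _ _
        · by_cases hc : (i = t.1 ∧ k = t.2.1) ∨ (i = t.2.1 ∧ k = t.1)
          · have hpad : padMetric t.1 t.2.1 t.2.2 T i k = t.2.2 := by
              simp [padMetric, hik, hc]
            rw [hpad]
            rcases le_total (prodC w k j) T with h | h
            · rw [min_eq_left h]
              refine (min_le_left _ _).trans ?_
              have h2 := tropMul_le (call t.1 t.2.1 t.2.2) (prodC w) i j k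
              rw [prodC_cons]
              simpa [call, hik, hc] using h2
            · rw [min_eq_right h]
              exact (min_le_right _ _).trans le_add_self
          · have hpad : padMetric t.1 t.2.1 t.2.2 T i k = T := by
              simp [padMetric, hik, hc]
            rw [hpad]
            exact (min_le_right _ _).trans le_self_add
      exact step.trans (add_le_add_right hIH _)

lemma wval_ne_top {w : List (Fin n × Fin n × ℝ≥0∞)} (h : ∀ t ∈ w, t.2.2 ≠ ⊤) :
    wval w ≠ ⊤ := by
  induction w with
  | nil => simp
  | cons t w ih =>
      rw [wval_cons]
      exact ENNReal.add_ne_top.mpr ⟨h t (List.mem_cons_self),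
        ih fun s hs => h s (List.mem_cons_of_mem t hs)⟩

/-- Any nonempty product of finite-valued calls with all entries finite is a product of
a nonempty list of metric matrices. -/
lemma prodC_mem_metricProds {w : List (Fin n × Fin n × ℝ≥0∞)} (hw : w ≠ [])
    (hvals : ∀ t ∈ w, t.2.2 ≠ ⊤) (hfin : ∀ i j, prodC w i j ≠ ⊤) :
    ∃ L : List (Matrix (Fin n) (Fin n) ℝ≥0∞),
      L ≠ [] ∧ (∀ M ∈ L, IsMetric M) ∧ prodC w = L.foldr tropMul tropId := by
  classical
  set S : ℝ≥0∞ := Finset.univ.sup (fun p : Fin n × Fin n => prodC w p.1 p.2) with hS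
  have hSne : S ≠ ⊤ := by
    rw [hS]
    have hlt : S < ⊤ := by
      rw [hS]
      exact (Finset.sup_lt_iff (by simp : (⊥ : ℝ≥0∞) < ⊤)).mpr
        fun p _ => lt_top_iff_ne_top.mpr (hfin p.1 p.2)
    exact hlt.ne
  set T : ℝ≥0∞ := wval w + S with hT
  have hTne : T ≠ ⊤ := ENNReal.add_ne_top.mpr ⟨wval_ne_top hvals, hSne⟩
  have hvT : ∀ t ∈ w, t.2.2 ≤ T := by
    intro t ht
    have h1 : t.2.2 ≤ wval w :=
      List.single_le_sum (fun x _ => zero_le) _ (List.mem_map_of_mem (f := fun t : Fin n × Fin n × ℝ≥0∞ => t.2.2) ht)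
    exact h1.trans le_self_add
  have hPT : ∀ i j, prodC w i j ≤ T := by
    intro i j
    exact (Finset.le_sup (f := fun p : Fin n × Fin n => prodC w p.1 p.2)
      (Finset.mem_univ (i, j))).trans le_add_self
  refine ⟨w.map fun t => padMetric t.1 t.2.1 t.2.2 T, by simpa using hw, ?_, ?_⟩
  · intro M hM
    obtain ⟨t, ht, rfl⟩ := List.mem_map.mp hM
    exact isMetric_padMetric (hvals t ht) hTne (hvT t ht)
  · show prodC w = padProd w T
    funext i j
    refine le_antisymm ?_ (padProd_le w T i j)
    have := le_padProd w T hvT i j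
    rwa [min_eq_left (hPT i j)] at this


/-- one "round": the word of calls realizing a metric matrix -/
noncomputable def roundW (M : Matrix (Fin n) (Fin n) ℝ≥0∞) : List (Fin n × Fin n × ℝ≥0∞) :=
  (allPairs n).map fun e => (e.1, e.2, M e.1 e.2)

lemma le_prodC_of_metric {M : Matrix (Fin n) (Fin n) ℝ≥0∞} (hM : IsMetric M)
    (w : List (Fin n × Fin n × ℝ≥0∞)) (hw : ∀ t ∈ w, M t.1 t.2.1 ≤ t.2.2) :
    ∀ i j, M i j ≤ prodC w i j := by
  induction w with
  | nil =>
      intro i j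
      by_cases hij : i = j
      · subst hij; simp [tropId, hM.2.1 i]
      · simp [tropId, hij]
  | cons t w ih =>
      intro i j
      rw [prodC_cons]
      refine le_tropMul fun k => ?_
      have hIH : M k j ≤ prodC w k j := ih (fun s hs => hw s (List.mem_cons_of_mem t hs)) k j
      by_cases hik : i = k
      · subst hik
        have : call t.1 t.2.1 t.2.2 i i = 0 := by simp [call]
        rw [this, zero_add]
        exact hIH
      · by_cases hc : (i = t.1 ∧ k = t.2.1) ∨ (i = t.2.1 ∧ k = t.1)
        · have hcall : call t.1 t.2.1 t.2.2 i k = t.2.2 := by simp [call, hik, hc]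
          rw [hcall]
          have hMik : M i k ≤ t.2.2 := by
            have := hw t (List.mem_cons_self)
            rcases hc with ⟨h1, h2⟩ | ⟨h1, h2⟩
            · rw [h1, h2]; exact this
            · rw [h1, h2, ← hM.2.2.1 t.1 t.2.1]; exact this
          calc M i j ≤ M i k + M k j := hM.2.2.2 i k j
            _ ≤ t.2.2 + prodC w k j := add_le_add hMik hIH
        · have : call t.1 t.2.1 t.2.2 i k = ⊤ := by simp [call, hik, hc]
          rw [this, top_add]
          exact le_top

lemma prodC_roundW {M : Matrix (Fin n) (Fin n) ℝ≥0∞} (hM : IsMetric M) :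
    prodC (roundW M) = M := by
  funext i j
  refine le_antisymm ?_ ?_
  · refine prodC_le_of_mem (w := roundW M) ?_
    exact List.mem_map.mpr ⟨(i, j), mem_allPairs _, rfl⟩
  · refine le_prodC_of_metric hM _ ?_ i j
    intro t ht
    obtain ⟨e, -, rfl⟩ := List.mem_map.mp ht
    exact le_rfl

lemma roundW_vals {M : Matrix (Fin n) (Fin n) ℝ≥0∞} (hM : IsMetric M) :
    ∀ t ∈ roundW M, t.2.2 ≠ ⊤ := by
  intro t ht
  obtain ⟨e, -, rfl⟩ := List.mem_map.mp ht
  exact hM.1 e.1 e.2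

lemma metricProd_eq (L : List (Matrix (Fin n) (Fin n) ℝ≥0∞)) (hL : ∀ M ∈ L, IsMetric M) :
    L.foldr tropMul tropId = prodC (L.flatMap roundW) := by
  induction L with
  | nil => simp [prodC]
  | cons M L ih =>
      rw [List.flatMap_cons, prodC_append, List.foldr_cons,
        prodC_roundW (hL M (List.mem_cons_self)),
        ih fun N hN => hL N (List.mem_cons_of_mem M hN)]

/-- the word over a pattern with given finite parameters -/
noncomputable def wordOf (I : List (Fin n × Fin n)) (a : Fin I.length → ℝ≥0) :
    List (Fin n × Fin n × ℝ≥0∞) :=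
  List.ofFn fun r => ((I.get r).1, (I.get r).2, (a r : ℝ≥0∞))

lemma callProdMap_eq_prodC (I : List (Fin n × Fin n)) (a : Fin I.length → ℝ≥0) :
    callProdMap I a = prodC (wordOf I a) := by
  unfold callProdMap prodC wordOf
  rw [List.map_ofFn]
  rfl

lemma wordOf_vals (I : List (Fin n × Fin n)) (a : Fin I.length → ℝ≥0) :
    ∀ t ∈ wordOf I a, t.2.2 ≠ ⊤ := by
  intro t ht
  obtain ⟨r, rfl⟩ := List.mem_ofFn.mp ht
  exact ENNReal.coe_ne_top

lemma wordOf_length (I : List (Fin n × Fin n)) (a : Fin I.length → ℝ≥0) :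
    (wordOf I a).length = I.length := by simp [wordOf]

/-- a word with finite values is in the range of the `callProdMap` of its pattern -/
lemma prodC_mem_range {w : List (Fin n × Fin n × ℝ≥0∞)} (hv : ∀ t ∈ w, t.2.2 ≠ ⊤) :
    prodC w ∈ Set.range (callProdMap (w.map fun t => (t.1, t.2.1))) := by
  have hlen : (w.map fun t => (t.1, t.2.1)).length = w.length := List.length_map _
  refine ⟨fun r => ((w.get (Fin.cast hlen r)).2.2).toNNReal, ?_⟩
  have hww : (wordOf (w.map fun t => (t.1, t.2.1))
      (fun r => ((w.get (Fin.cast hlen r)).2.2).toNNReal)) = w := by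
    refine List.ext_get (by simp [wordOf]) ?_
    intro m h1 h2
    have hm : m < w.length := h2
    have hm' : m < (w.map fun t => (t.1, t.2.1)).length := by simpa using hm
    simp only [wordOf, List.get_ofFn]
    have hmap : (w.map fun t => (t.1, t.2.1)).get ⟨m, hm'⟩ =
        ((w.get ⟨m, hm⟩).1, (w.get ⟨m, hm⟩).2.1) := by simp
    have hcoe : ((w[m].2.2).toNNReal : ℝ≥0∞) = w[m].2.2 :=
      ENNReal.coe_toNNReal (hv _ (List.getElem_mem hm))
    ext <;> simp [hmap, Fin.cast, hcoe]
  rw [callProdMap_eq_prodC, hww]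

lemma tropMul_call_absorb {X : Matrix (Fin n) (Fin n) ℝ≥0∞} {k l : Fin n} {h : ℝ≥0∞}
    (hX : ∀ i j, X i j ≤ h) : tropMul X (call k l h) = X := by
  funext i j
  apply le_antisymm
  · simpa [call] using tropMul_le X (call k l h) i j j
  · refine le_tropMul fun m => ?_
    by_cases hmj : m = j
    · subst hmj; simp [call]
    · by_cases hc : (m = k ∧ j = l) ∨ (m = l ∧ j = k)
      · have : call k l h m j = h := by simp [call, hmj, hc]
        rw [this]
        exact (hX i j).trans le_add_self
      · simp [call, hmj, hc]

lemma absorb_round (X : Matrix (Fin n) (Fin n) ℝ≥0∞) (h : ℝ≥0∞)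
    (hX : ∀ i j, X i j ≤ h) (J : List (Fin n × Fin n)) :
    tropMul X (prodC (J.map fun e => (e.1, e.2, h))) = X := by
  induction J with
  | nil => simpa using tropMul_tropId X
  | cons e J ih =>
      rw [List.map_cons, prodC_cons, ← tropMul_assoc]
      have : tropMul X (call e.1 e.2 h) = X := tropMul_call_absorb hX
      rw [this, ih]

lemma pattern_hugeWord (J : List (Fin n × Fin n)) (h : ℝ≥0∞) :
    (J.map fun e => (e.1, e.2, h)).map (fun t => (t.1, t.2.1)) = J := by
  rw [List.map_map]
  have heq : ((fun t : Fin n × Fin n × ℝ≥0∞ => (t.1, t.2.1)) ∘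
      fun e : Fin n × Fin n => (e.1, e.2, h)) = id := funext fun e => rfl
  rw [heq, List.map_id]


end TropFan

theorem products_of_metrics_fan (n : ℕ) :
    ∃ F : Finset (List (Fin n × Fin n)),
      {A : Matrix (Fin n) (Fin n) ℝ≥0∞ |
        ∃ L : List (Matrix (Fin n) (Fin n) ℝ≥0∞),
          L ≠ [] ∧ (∀ M ∈ L, IsMetric M) ∧ A = L.foldr tropMul tropId} =
      ⋃ I ∈ F, Set.range (callProdMap I) := by
  classical
  rcases Nat.eq_zero_or_pos n with hn | hn
  · -- degenerate case n = 0 : all matrices are equal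
    subst hn
    refine ⟨{[]}, ?_⟩
    ext A
    constructor
    · rintro -
      refine Set.mem_iUnion₂.mpr ⟨[], Finset.mem_singleton_self _, Fin.elim0, ?_⟩
      funext i
      exact i.elim0
    · rintro -
      refine ⟨[tropId], by simp, ?_, ?_⟩
      · intro M hM
        exact ⟨fun i => i.elim0, fun i => i.elim0, fun i => i.elim0, fun i => i.elim0⟩
      · funext i
        exact i.elim0
  · set N := (n - 1) * (TropFan.allPairs n).length with hN
    refine ⟨(Finset.range (N + 1)).biUnion fun k =>
      Finset.image (fun f : Fin k → Fin n × Fin n => List.ofFn f ++ TropFan.allPairs n)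
        Finset.univ, ?_⟩
    ext A
    constructor
    · rintro ⟨L, hL, hmet, rfl⟩
      set w1 := L.flatMap TropFan.roundW with hw1
      have hA : L.foldr tropMul tropId = prodC w1 := TropFan.metricProd_eq L hmet
      have hvals1 : ∀ t ∈ w1, t.2.2 ≠ ⊤ := by
        intro t ht
        obtain ⟨M, hM, ht'⟩ := List.mem_flatMap.mp ht
        exact TropFan.roundW_vals (hmet M hM) t ht'
      obtain ⟨u, hsub, hulen, hueq⟩ := TropFan.exists_short_word w1
      obtain ⟨M0, L', rfl⟩ := List.exists_cons_of_ne_nil hL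
      have hfin : ∀ i j, prodC w1 i j ≠ ⊤ := by
        intro i j
        have hmem : (i, j, M0 i j) ∈ w1 :=
          List.mem_flatMap.mpr ⟨M0, List.mem_cons_self,
            List.mem_map.mpr ⟨(i, j), TropFan.mem_allPairs _, rfl⟩⟩
        exact ne_top_of_le_ne_top ((hmet M0 (List.mem_cons_self)).1 i j)
          (TropFan.prodC_le_of_mem hmem)
      set S := Finset.univ.sup (fun p : Fin n × Fin n => prodC w1 p.1 p.2) with hS
      have hSne : S ≠ ⊤ := by
        have hlt : S < ⊤ := by
          rw [hS]
          exact (Finset.sup_lt_iff (by simp : (⊥ : ℝ≥0∞) < ⊤)).mpr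
            fun p _ => lt_top_iff_ne_top.mpr (hfin p.1 p.2)
        exact hlt.ne
      have hXle : ∀ i j, prodC w1 i j ≤ S := fun i j =>
        Finset.le_sup (f := fun p : Fin n × Fin n => prodC w1 p.1 p.2) (Finset.mem_univ (i, j))
      set wstar := u ++ (TropFan.allPairs n).map (fun e => (e.1, e.2, S)) with hws
      have heq : prodC wstar = prodC w1 := by
        rw [hws, TropFan.prodC_append, hueq, TropFan.absorb_round _ _ hXle]
      have hvstar : ∀ t ∈ wstar, t.2.2 ≠ ⊤ := by
        intro t ht
        rcases List.mem_append.mp ht with ht | ht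
        · exact hvals1 t (hsub.subset ht)
        · obtain ⟨e, -, rfl⟩ := List.mem_map.mp ht
          exact hSne
      have hrange := TropFan.prodC_mem_range hvstar
      have hpat : wstar.map (fun t => (t.1, t.2.1)) =
          (u.map fun t => (t.1, t.2.1)) ++ TropFan.allPairs n := by
        rw [hws, List.map_append, TropFan.pattern_hugeWord]
      rw [hpat, heq, ← hA] at hrange
      refine Set.mem_iUnion₂.mpr ⟨(u.map fun t => (t.1, t.2.1)) ++ TropFan.allPairs n, ?_, hrange⟩
      refine Finset.mem_biUnion.mpr ⟨(u.map fun t => (t.1, t.2.1)).length, ?_, ?_⟩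
      · refine Finset.mem_range.mpr ?_
        simp only [List.length_map]
        omega
      · exact Finset.mem_image.mpr ⟨(u.map fun t => (t.1, t.2.1)).get, Finset.mem_univ _,
          by rw [List.ofFn_get]⟩
    · intro hA
      obtain ⟨I, hIF, a, rfl⟩ := Set.mem_iUnion₂.mp hA
      obtain ⟨k, -, hmem⟩ := Finset.mem_biUnion.mp hIF
      obtain ⟨f, -, rfl⟩ := Finset.mem_image.mp hmem
      have hbr := TropFan.callProdMap_eq_prodC (List.ofFn f ++ TropFan.allPairs n) a
      set w := TropFan.wordOf (List.ofFn f ++ TropFan.allPairs n) a with hw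
      have hv : ∀ t ∈ w, t.2.2 ≠ ⊤ := TropFan.wordOf_vals _ a
      have hap : TropFan.allPairs n ≠ [] :=
        List.ne_nil_of_mem (TropFan.mem_allPairs (⟨0, hn⟩, ⟨0, hn⟩))
      have hwne : w ≠ [] := by
        have h1 : w.length = (List.ofFn f ++ TropFan.allPairs n).length :=
          TropFan.wordOf_length _ a
        have h2 : 0 < (TropFan.allPairs n).length := List.length_pos_iff.mpr hap
        have h3 : 0 < w.length := by
          rw [h1, List.length_append]
          omega
        exact List.length_pos_iff.mp h3
      have hfin : ∀ i j, prodC w i j ≠ ⊤ := by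
        intro i j
        have hmem2 : (i, j) ∈ List.ofFn f ++ TropFan.allPairs n :=
          List.mem_append_right _ (TropFan.mem_allPairs _)
        obtain ⟨r, hr⟩ := List.mem_iff_get.mp hmem2
        have hel : (i, j, ((a r : ℝ≥0) : ℝ≥0∞)) ∈ w := by
          rw [hw]
          refine List.mem_ofFn.mpr ⟨r, ?_⟩
          simp only [hr]
        exact ne_top_of_le_ne_top ENNReal.coe_ne_top (TropFan.prodC_le_of_mem hel)
      obtain ⟨L, hL, hmet, heq⟩ := TropFan.prodC_mem_metricProds hwne hv hfin
      exact ⟨L, hL, hmet, by rw [hbr, heq]⟩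
end
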